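/- arXiv:2401.00645 — 3 statements merged into one kernel-verified Lean document; each statement's English description precedes it below -/
import Mathlib

section
/- Let f : ℝ × ℝ → ℝ be bounded with f(t, t) = 0 for all t, f(a + 2π, b + 2π) = f(a, b) for all a ≤ b ≤ a + 2π, and suppose that for all real numbers a ≤ b ≤ c ≤ d ≤ a + 2π one has f(a, c) + f(b, d) ≤ f(a, d) + f(b, c). For each integer n ≥ 3 let m_n := inf over all nondecreasing sequences t₀ ≤ t₁ ≤ … ≤ t_n with t_n = t₀ + 2π of the sum Σ_{i=0}^{n−1} f(t_i, t_{i+1}). Then the sequence (m_n) is convex: m_{n−1} + m_{n+1} ≥ 2·m_n for every n ≥ 4. -/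
open Real

namespace DowkerAux

open Finset

/-- Sum of `f` over the arcs of the chain `t 0, t 1, ..., t N`. -/
noncomputable def SS (f : ℝ × ℝ → ℝ) (t : ℕ → ℝ) (N : ℕ) : ℝ :=
  ∑ i ∈ Finset.range N, f (t i, t (i+1))

def Pset (f : ℝ × ℝ → ℝ) (N : ℕ) : Set ℝ :=
  {S : ℝ | ∃ t : Fin (N + 1) → ℝ, Monotone t ∧
    t (Fin.last N) = t 0 + 2 * π ∧
    S = ∑ i : Fin N, f (t i.castSucc, t i.succ)}

theorem mono_of_steps {t : ℕ → ℝ} {N : ℕ} (h : ∀ i < N, t i ≤ t (i+1)) :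
    ∀ i j, i ≤ j → j ≤ N → t i ≤ t j := by
  intro i j hij hjN
  induction j with
  | zero => simp_all
  | succ k ih =>
    rcases Nat.eq_or_lt_of_le hij with rfl | hlt
    · exact le_rfl
    · exact (ih (by omega) (by omega)).trans (h k (by omega))

theorem per_int {f : ℝ × ℝ → ℝ}
    (hper : ∀ a b : ℝ, a ≤ b → b ≤ a + 2 * π → f (a + 2 * π, b + 2 * π) = f (a, b))
    (M : ℤ) {a b : ℝ} (h1 : a ≤ b) (h2 : b ≤ a + 2 * π) :
    f (a + 2 * π * M, b + 2 * π * M) = f (a, b) := by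
  have pos : ∀ k : ℕ, f (a + 2 * π * k, b + 2 * π * k) = f (a, b) := by
    intro k
    induction k with
    | zero => simp
    | succ k ih =>
      have e1 : a + 2 * π * (k+1 : ℕ) = (a + 2 * π * k) + 2 * π := by push_cast; ring
      have e2 : b + 2 * π * (k+1 : ℕ) = (b + 2 * π * k) + 2 * π := by push_cast; ring
      rw [e1, e2, hper _ _ (by linarith) (by linarith), ih]
  have neg : ∀ k : ℕ, f (a - 2 * π * k, b - 2 * π * k) = f (a, b) := by
    intro k
    induction k with
    | zero => simp
    | succ k ih =>
      have key := hper (a - 2 * π * ((k:ℝ)+1)) (b - 2 * π * ((k:ℝ)+1))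
        (by linarith) (by linarith)
      have e1 : a - 2 * π * ((k:ℝ)+1) + 2 * π = a - 2 * π * k := by ring
      have e2 : b - 2 * π * ((k:ℝ)+1) + 2 * π = b - 2 * π * k := by ring
      rw [e1, e2] at key
      have e3 : a - 2 * π * ((k:ℕ)+1 : ℕ) = a - 2 * π * ((k:ℝ)+1) := by push_cast; ring
      have e4 : b - 2 * π * ((k:ℕ)+1 : ℕ) = b - 2 * π * ((k:ℝ)+1) := by push_cast; ring
      rw [e3, e4, ← key, ih]
  obtain ⟨k, rfl | rfl⟩ := Int.eq_nat_or_neg M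
  · have : a + 2 * π * ((k : ℤ) : ℝ) = a + 2 * π * k := by push_cast; ring
    have h2' : b + 2 * π * ((k : ℤ) : ℝ) = b + 2 * π * k := by push_cast; ring
    rw [this, h2', pos]
  · have : a + 2 * π * ((-(k:ℤ) : ℤ) : ℝ) = a - 2 * π * k := by push_cast; ring
    have h2' : b + 2 * π * ((-(k:ℤ) : ℤ) : ℝ) = b - 2 * π * k := by push_cast; ring
    rw [this, h2', neg]

theorem rot {f : ℝ × ℝ → ℝ}
    (hper : ∀ a b : ℝ, a ≤ b → b ≤ a + 2 * π → f (a + 2 * π, b + 2 * π) = f (a, b))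
    (t : ℕ → ℝ) (q r : ℕ) (hq : 1 ≤ q) (hr : r ≤ q)
    (hmono : ∀ i < q, t i ≤ t (i+1)) (hend : t q = t 0 + 2 * π) :
    ∃ u : ℕ → ℝ, (∀ i < q, u i ≤ u (i+1)) ∧ u q = u 0 + 2 * π ∧
      SS f u q = SS f t q ∧ (∀ i ≤ q - r, u i = t (r + i)) ∧
      (∀ i, q - r < i → i ≤ q → u i = t (i - (q - r)) + 2 * π) := by
  classical
  have hmono' := mono_of_steps hmono
  set u : ℕ → ℝ := fun i => if i ≤ q - r then t (r + i) else t (i - (q - r)) + 2 * π with hu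
  have hfst : ∀ i ≤ q - r, u i = t (r + i) := by
    intro i hi; simp only [hu]; rw [if_pos hi]
  have hsnd : ∀ i, q - r ≤ i → i ≤ q → u i = t (i - (q - r)) + 2 * π := by
    intro i h1 h2
    rcases Nat.eq_or_lt_of_le h1 with rfl | hlt
    · rw [hfst _ le_rfl]
      have e0 : r + (q - r) = q := by omega
      rw [e0, hend]
      have e1 : q - r - (q - r) = 0 := by omega
      rw [e1]
    · simp only [hu]; rw [if_neg (show ¬ i ≤ q - r by omega)]
  refine ⟨u, ?_, ?_, ?_, hfst, fun i h1 h2 => hsnd i (le_of_lt h1) h2⟩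
  · -- monotone steps
    intro i hi
    by_cases h1 : i + 1 ≤ q - r
    · rw [hfst i (by omega), hfst (i+1) h1]
      exact hmono (r + i) (by omega)
    · by_cases h2 : i ≤ q - r
      · rw [hsnd i (by omega) (by omega), hsnd (i+1) (by omega) (by omega)]
        have e1 : i - (q - r) = 0 := by omega
        have e2 : i + 1 - (q - r) = 1 := by omega
        rw [e1, e2]
        have := hmono 0 (by omega)
        linarith
      · rw [hsnd i (by omega) (by omega), hsnd (i+1) (by omega) (by omega)]
        have e : i + 1 - (q - r) = (i - (q - r)) + 1 := by omega
        rw [e]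
        have := hmono (i - (q - r)) (by omega)
        linarith
  · -- endpoints
    rw [hsnd q (by omega) le_rfl, hfst 0 (by omega)]
    have e : q - (q - r) = r := by omega
    rw [e]
    have e2 : r + 0 = r := by omega
    rw [e2]
  · -- sums
    have hsplit : (q - r) + r = q := by omega
    have lhs : SS f u q
        = (∑ i ∈ range (q - r), f (t (r + i), t (r + i + 1)))
          + ∑ i ∈ range r, f (t i, t (i + 1)) := by
      have h := Finset.sum_range_add (fun i => f (u i, u (i+1))) (q - r) r
      rw [hsplit] at h
      rw [SS, h]
      congr 1
      · apply Finset.sum_congr rfl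
        intro i hi
        rw [Finset.mem_range] at hi
        rw [hfst i (by omega), hfst (i+1) (by omega)]
        have e : r + (i+1) = r + i + 1 := by omega
        rw [e]
      · apply Finset.sum_congr rfl
        intro i hi
        rw [Finset.mem_range] at hi
        rw [hsnd (q - r + i) (by omega) (by omega),
            hsnd (q - r + i + 1) (by omega) (by omega)]
        have e1 : q - r + i - (q - r) = i := by omega
        have e2 : q - r + i + 1 - (q - r) = i + 1 := by omega
        rw [e1, e2]
        exact hper (t i) (t (i+1)) (hmono i (by omega))
          (by have := hmono' (i+1) q (by omega) le_rfl
              have := hmono' 0 i (by omega) (by omega)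
              linarith)
    have hsplit2 : r + (q - r) = q := by omega
    have rhs : SS f t q
        = (∑ i ∈ range r, f (t i, t (i + 1)))
          + ∑ i ∈ range (q - r), f (t (r + i), t (r + i + 1)) := by
      have h := Finset.sum_range_add (fun i => f (t i, t (i+1))) r (q - r)
      rw [hsplit2] at h
      rw [SS, h]
    rw [lhs, rhs]; ring

theorem find_nest (p : ℕ) (hp : 3 ≤ p) (a b : ℕ → ℝ)
    (ha : ∀ i < p, a i ≤ a (i+1)) (hae : a p = a 0 + 2 * π)
    (hb : ∀ i < p + 2, b i ≤ b (i+1))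
    (h0 : a 0 ≤ b 0) (htop : ∀ i ≤ p + 1, b i ≤ a 0 + 2 * π) :
    ∃ j k J, j + J + 1 ≤ p ∧ k + J + 1 ≤ p ∧
      a j ≤ b k ∧ b (k+1) ≤ a (j+1) ∧
      a (j+J) ≤ b (k+J+1) ∧ b (k+J+2) ≤ a (j+J+1) := by
  classical
  have hbmono := mono_of_steps hb
  obtain ⟨q, rfl⟩ : ∃ q, p = q + 1 := ⟨p - 1, by omega⟩
  set p := q + 1
  set g : ℕ → ℕ := fun i => Nat.findGreatest (fun j => a j ≤ b i) q with hg
  have hg_le : ∀ i, g i ≤ q := fun i => Nat.findGreatest_le q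
  have hg_spec : ∀ i ≤ p + 2, a (g i) ≤ b i := by
    intro i hi
    exact Nat.findGreatest_spec (P := fun j => a j ≤ b i) (n := q) (m := 0) (by omega)
      (h0.trans (hbmono 0 i (by omega) hi))
  have hg_ub : ∀ i ≤ p + 1, b i ≤ a (g i + 1) := by
    intro i hi
    by_cases hlt : g i < q
    · have := Nat.findGreatest_is_greatest (P := fun j => a j ≤ b i) (n := q) (k := g i + 1)
        (Nat.lt_succ_of_le le_rfl) (by omega)
      exact (not_le.mp this).le
    · have hgi : g i = q := by have := hg_le i; omega
      have : a (g i + 1) = a 0 + 2 * π := by rw [hgi]; exact hae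
      rw [this]; exact htop i hi
  have hg_mono : ∀ i i', i ≤ i' → i' ≤ p + 2 → g i ≤ g i' := by
    intro i i' hii hi'
    exact Nat.le_findGreatest (hg_le i)
      ((hg_spec i (by omega)).trans (hbmono i i' hii hi'))
  -- the lagged function h
  set h : ℕ → ℕ := fun i => Nat.rec (g 0) (fun n ih => min (g (n+1)) (ih+1)) i with hhdef
  have hh0 : h 0 = g 0 := rfl
  have hhs : ∀ i, h (i+1) = min (g (i+1)) (h i + 1) := fun _ => rfl
  have hh_le_g : ∀ i ≤ p + 1, h i ≤ g i := by
    intro i _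
    cases i with
    | zero => exact le_of_eq hh0
    | succ n => rw [hhs n]; exact min_le_left _ _
  have hh_mono : ∀ i, i + 1 ≤ p + 1 → h i ≤ h (i+1) := by
    intro i hi
    rw [hhs i]
    have : h i ≤ g (i+1) :=
      (hh_le_g i (by omega)).trans (hg_mono i (i+1) (by omega) (by omega))
    omega
  have hh_step : ∀ i, h (i+1) ≤ h i + 1 := by
    intro i; rw [hhs i]; omega
  -- a collision forces g values
  have hcol : ∀ i, i + 1 ≤ p + 1 → h (i+1) = h i → g i = h i ∧ g (i+1) = h i := by
    intro i hi hc
    have h1 : min (g (i+1)) (h i + 1) = h i := by rw [← hhs i, hc]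
    have h2 : g (i+1) = h i := by omega
    have h3 : h i ≤ g i := hh_le_g i (by omega)
    have h4 : g i ≤ g (i+1) := hg_mono i (i+1) (by omega) (by omega)
    exact ⟨by omega, h2⟩
  -- existence of the first collision
  have hC1 : ∃ i, i ≤ p ∧ h (i+1) = h i := by
    by_contra hno
    push_neg at hno
    have grow : ∀ i ≤ p + 1, h 0 + i ≤ h i := by
      intro i hi
      induction i with
      | zero => omega
      | succ n ih =>
        have h1 := hno n (by omega)
        have h2 := hh_mono n (by omega)
        have := ih (by omega)
        omega
    have := grow (p+1) le_rfl
    have := hh_le_g (p+1) le_rfl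
    have := hg_le (p+1)
    omega
  set k := Nat.find hC1 with hk
  obtain ⟨hkp, hkcol⟩ := Nat.find_spec hC1
  have hkmin : ∀ i < k, h (i+1) = h i + 1 := by
    intro i hik
    have := Nat.find_min hC1 hik
    push_neg at this
    have h1 : h (i+1) ≠ h i := this (by omega)
    have h2 := hh_mono i (by omega)
    have h3 := hh_step i
    omega
  have hk_val' : ∀ i ≤ k, h i = h 0 + i := by
    intro i hi
    induction i with
    | zero => omega
    | succ n ih =>
      have := hkmin n (by omega)
      have := ih (by omega)
      omega
  have hk_val : h k = h 0 + k := hk_val' k le_rfl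
  -- second collision
  have hC2 : ∃ i, (k < i ∧ i ≤ p) ∧ h (i+1) = h i := by
    by_contra hno
    push_neg at hno
    have grow : ∀ i, k + 1 ≤ i → i ≤ p + 1 → h (k+1) + (i - (k+1)) ≤ h i := by
      intro i h1
      induction i, h1 using Nat.le_induction with
      | base => intro _; omega
      | succ n hn ih =>
        intro h2
        have hnc : h (n+1) ≠ h n := hno n ⟨by omega, by omega⟩
        have := hh_mono n (by omega)
        have := ih (by omega)
        omega
    have g1 := grow (p+1) (by omega) le_rfl
    have g2 := hh_le_g (p+1) le_rfl
    have g3 := hg_le (p+1)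
    have g4 : h (k+1) = h k := hkcol
    omega
  set k' := Nat.find hC2 with hk'
  obtain ⟨⟨hkk', hk'p⟩, hk'col⟩ := Nat.find_spec hC2
  have hk'min : ∀ i, k < i → i < k' → h (i+1) = h i + 1 := by
    intro i h1 h2
    have := Nat.find_min hC2 h2
    push_neg at this
    have hne : h (i+1) ≠ h i := this ⟨h1, by omega⟩
    have := hh_mono i (by omega)
    have := hh_step i
    omega
  have hk'val' : ∀ i, k + 1 ≤ i → i ≤ k' → h i = h (k+1) + (i - (k+1)) := by
    intro i h1
    induction i, h1 using Nat.le_induction with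
    | base => intro _; omega
    | succ n hn ih =>
      intro h2
      have := hk'min n (by omega) (by omega)
      have := ih (by omega)
      omega
  -- set up the final data
  set j := h k with hj
  set J := k' - k - 1 with hJ
  have hjk' : h k' = j + J := by
    have e1 := hk'val' k' (by omega) le_rfl
    have e2 : h (k+1) = h k := hkcol
    omega
  obtain ⟨hgk, hgk1⟩ := hcol k (by omega) hkcol
  obtain ⟨hgk', hgk'1⟩ := hcol k' (by omega) hk'col
  refine ⟨j, k, J, ?_, ?_, ?_, ?_, ?_, ?_⟩
  · -- j + J + 1 ≤ p
    have := hg_le k'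
    omega
  · -- k + J + 1 ≤ p
    omega
  · -- a j ≤ b k
    have := hg_spec k (by omega)
    rwa [hgk] at this
  · -- b (k+1) ≤ a (j+1)
    have := hg_ub (k+1) (by omega)
    rwa [hgk1] at this
  · -- a (j+J) ≤ b (k+J+1)
    have e : k + J + 1 = k' := by omega
    rw [e]
    have := hg_spec k' (by omega)
    rwa [hgk', hjk'] at this
  · -- b (k+J+2) ≤ a (j+J+1)
    have e : k + J + 2 = k' + 1 := by omega
    rw [e]
    have := hg_ub (k'+1) (by omega)
    rwa [hgk'1, hjk'] at this

theorem SS_split (f : ℝ × ℝ → ℝ) (t : ℕ → ℝ) (a b : ℕ) :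
    SS f t (a + b) = SS f t a + ∑ i ∈ Finset.range b, f (t (a+i), t (a+i+1)) := by
  rw [SS, SS, Finset.sum_range_add]

theorem SS_one (f : ℝ × ℝ → ℝ) (t : ℕ → ℝ) : SS f t 1 = f (t 0, t 1) := by
  rw [SS, Finset.sum_range_one]

theorem combine {f : ℝ × ℝ → ℝ}
    (hsub : ∀ a b c d : ℝ, a ≤ b → b ≤ c → c ≤ d → d ≤ a + 2 * π →
      f (a, c) + f (b, d) ≤ f (a, d) + f (b, c))
    (p J : ℕ) (hJ : J + 1 ≤ p)
    (A B : ℕ → ℝ) (hA : ∀ i < p, A i ≤ A (i+1)) (hAe : A p = A 0 + 2 * π)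
    (hB : ∀ i < p + 2, B i ≤ B (i+1)) (hBe : B (p+2) = B 0 + 2 * π)
    (h1 : A 0 ≤ B 0) (h2 : B 1 ≤ A 1) (h3 : A J ≤ B (J+1)) (h4 : B (J+2) ≤ A (J+1)) :
    ∃ u v : ℕ → ℝ,
      (∀ i < p + 1, u i ≤ u (i+1)) ∧ u (p+1) = u 0 + 2 * π ∧
      (∀ i < p + 1, v i ≤ v (i+1)) ∧ v (p+1) = v 0 + 2 * π ∧
      SS f u (p+1) + SS f v (p+1) ≤ SS f A p + SS f B (p+2) := by
  classical
  have hAm := mono_of_steps hA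
  have hBm := mono_of_steps hB
  set u : ℕ → ℝ := fun i => if i = 0 then A 0 else if i ≤ J+1 then B i else A (i-1) with hu
  set v : ℕ → ℝ := fun i => if i ≤ J then (if i = 0 then B 0 else A i) else B (i+1) with hv
  have hu0 : u 0 = A 0 := by simp [hu]
  have huB : ∀ i, 1 ≤ i → i ≤ J+1 → u i = B i := by
    intro i hi1 hi2
    simp only [hu]
    rw [if_neg (by omega), if_pos hi2]
  have huA : ∀ i, J+2 ≤ i → u i = A (i-1) := by
    intro i hi
    simp only [hu]
    rw [if_neg (by omega), if_neg (by omega)]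
  have hv0 : v 0 = B 0 := by simp [hv]
  have hvA : ∀ i, 1 ≤ i → i ≤ J → v i = A i := by
    intro i hi1 hi2
    simp only [hv]
    rw [if_pos hi2, if_neg (by omega)]
  have hvB : ∀ i, J+1 ≤ i → v i = B (i+1) := by
    intro i hi
    simp only [hv]
    rw [if_neg (by omega)]
  refine ⟨u, v, ?_, ?_, ?_, ?_, ?_⟩
  · -- monotone u
    intro i hi
    rcases Nat.eq_zero_or_pos i with rfl | hpos
    · rw [hu0, huB 1 le_rfl (by omega)]
      exact h1.trans (hB 0 (by omega))
    · by_cases hiJ : i ≤ J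
      · rw [huB i hpos (by omega), huB (i+1) (by omega) (by omega)]
        exact hB i (by omega)
      · by_cases hiJ1 : i = J + 1
        · rw [huB i hpos (by omega), huA (i+1) (by omega)]
          have e : i + 1 - 1 = J + 1 := by omega
          rw [e, hiJ1]
          exact (hB (J+1) (by omega)).trans h4
        · rw [huA i (by omega), huA (i+1) (by omega)]
          have e : i + 1 - 1 = (i - 1) + 1 := by omega
          rw [e]
          exact hA (i-1) (by omega)
  · -- endpoint u
    rw [huA (p+1) (by omega), hu0]
    have e : p + 1 - 1 = p := by omega
    rw [e, hAe]
  · -- monotone v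
    intro i hi
    rcases Nat.eq_zero_or_pos i with rfl | hpos
    · rcases Nat.eq_zero_or_pos J with hJ0 | hJpos
      · rw [hv0, hvB 1 (by omega)]
        exact (hB 0 (by omega)).trans (hB 1 (by omega))
      · rw [hv0, hvA 1 le_rfl (by omega)]
        exact (hB 0 (by omega)).trans h2
    · by_cases hiJ : i + 1 ≤ J
      · rw [hvA i hpos (by omega), hvA (i+1) (by omega) hiJ]
        exact hA i (by omega)
      · by_cases hiJ2 : i ≤ J
        · rw [hvA i hpos hiJ2, hvB (i+1) (by omega)]
          have e : i = J := by omega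
          rw [e]
          exact h3.trans (hB (J+1) (by omega))
        · rw [hvB i (by omega), hvB (i+1) (by omega)]
          exact hB (i+1) (by omega)
  · -- endpoint v
    rw [hvB (p+1) (by omega), hv0, hBe]
  · -- the sum inequality
    rcases Nat.eq_zero_or_pos J with hJ0 | hJpos
    · -- case J = 0
      subst hJ0
      have Su : SS f u (p+1)
          = f (A 0, B 1) + f (B 1, A 1)
            + ∑ i ∈ Finset.range (p-1), f (A (1+i), A (1+i+1)) := by
        rw [show SS f u (p+1) = SS f u (1+1+(p-1)) from by rw [show 1+1+(p-1) = p+1 by omega]]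
        rw [SS_split, SS_split, SS_one, Finset.sum_range_one, hu0,
            huB 1 le_rfl (by omega), huA (1+0+1) (by omega)]
        congr 1
        apply Finset.sum_congr rfl
        intro i hi
        rw [huA (1+1+i) (by omega), huA (1+1+i+1) (by omega)]
        rw [show 1+1+i-1 = 1+i by omega, show 1+1+i+1-1 = 1+i+1 by omega]
      have Sv : SS f v (p+1)
          = f (B 0, B 2) + ∑ i ∈ Finset.range p, f (B (2+i), B (2+i+1)) := by
        rw [show SS f v (p+1) = SS f v (1+p) from by rw [show 1+p = p+1 by omega]]
        rw [SS_split, SS_one, hv0, hvB 1 (by omega)]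
        congr 1
        apply Finset.sum_congr rfl
        intro i hi
        rw [hvB (1+i) (by omega), hvB (1+i+1) (by omega)]
        rw [show 1+i+1 = 2+i by omega]
      have SA : SS f A p
          = f (A 0, A 1) + ∑ i ∈ Finset.range (p-1), f (A (1+i), A (1+i+1)) := by
        rw [show SS f A p = SS f A (1+(p-1)) from by rw [show 1+(p-1) = p by omega]]
        rw [SS_split, SS_one]
      have SB : SS f B (p+2)
          = f (B 0, B 1) + f (B 1, B 2)
            + ∑ i ∈ Finset.range p, f (B (2+i), B (2+i+1)) := by
        rw [show SS f B (p+2) = SS f B (1+1+p) from by rw [show 1+1+p = p+2 by omega]]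
        rw [SS_split, SS_split, SS_one, Finset.sum_range_one]
      have key1 : f (A 0, B 1) + f (B 0, B 2) ≤ f (A 0, B 2) + f (B 0, B 1) := by
        apply hsub _ _ _ _ h1 (hB 0 (by omega)) (hB 1 (by omega))
        calc B 2 ≤ A 1 := h4
          _ ≤ A p := hAm 1 p (by omega) le_rfl
          _ = A 0 + 2 * π := hAe
      have key2 : f (A 0, B 2) + f (B 1, A 1) ≤ f (A 0, A 1) + f (B 1, B 2) := by
        apply hsub _ _ _ _ (h1.trans (hB 0 (by omega))) (hB 1 (by omega)) h4
        calc A 1 ≤ A p := hAm 1 p (by omega) le_rfl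
          _ = A 0 + 2 * π := hAe
      rw [Su, Sv, SA, SB]
      linarith [key1, key2]
    · -- case J ≥ 1
      have Su : SS f u (p+1)
          = f (A 0, B 1) + (∑ i ∈ Finset.range J, f (B (1+i), B (1+i+1)))
            + f (B (J+1), A (J+1))
            + ∑ i ∈ Finset.range (p-J-1), f (A (J+1+i), A (J+1+i+1)) := by
        rw [show SS f u (p+1) = SS f u (1+J+1+(p-J-1)) from by
          rw [show 1+J+1+(p-J-1) = p+1 by omega]]
        rw [SS_split, SS_split, SS_split, SS_one]
        rw [hu0, huB 1 le_rfl (by omega)]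
        congr 1
        · congr 1
          · congr 1
            apply Finset.sum_congr rfl
            intro i hi
            rw [Finset.mem_range] at hi
            rw [huB (1+i) (by omega) (by omega), huB (1+i+1) (by omega) (by omega)]
          · rw [Finset.sum_range_one]
            rw [show 1+J+0 = J+1 by omega]
            rw [huB (J+1) (by omega) le_rfl, show J+1+1 = J+2 by omega,
                huA (J+2) le_rfl, show J+2-1 = J+1 by omega]
        · apply Finset.sum_congr rfl
          intro i hi
          rw [huA (1+J+1+i) (by omega), huA (1+J+1+i+1) (by omega)]
          rw [show 1+J+1+i-1 = J+1+i by omega, show 1+J+1+i+1-1 = J+1+i+1 by omega]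
      have Sv : SS f v (p+1)
          = f (B 0, A 1) + (∑ i ∈ Finset.range (J-1), f (A (1+i), A (1+i+1)))
            + f (A J, B (J+2))
            + ∑ i ∈ Finset.range (p-J), f (B (J+2+i), B (J+2+i+1)) := by
        rw [show SS f v (p+1) = SS f v (1+(J-1)+1+(p-J)) from by
          rw [show 1+(J-1)+1+(p-J) = p+1 by omega]]
        rw [SS_split, SS_split, SS_split, SS_one]
        rw [hv0, hvA 1 le_rfl (by omega)]
        congr 1
        · congr 1
          · congr 1
            apply Finset.sum_congr rfl
            intro i hi
            rw [Finset.mem_range] at hi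
            rw [hvA (1+i) (by omega) (by omega), hvA (1+i+1) (by omega) (by omega)]
          · rw [Finset.sum_range_one]
            rw [show 1+(J-1)+0 = J by omega]
            rw [hvA J (by omega) le_rfl, hvB (J+1) le_rfl, show J+1+1 = J+2 by omega]
        · apply Finset.sum_congr rfl
          intro i hi
          rw [show 1+(J-1)+1+i = J+1+i by omega]
          rw [hvB (J+1+i) (by omega), hvB (J+1+i+1) (by omega)]
          rw [show J+1+i+1 = J+2+i by omega]
      have SA : SS f A p
          = f (A 0, A 1) + (∑ i ∈ Finset.range (J-1), f (A (1+i), A (1+i+1)))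
            + f (A J, A (J+1))
            + ∑ i ∈ Finset.range (p-J-1), f (A (J+1+i), A (J+1+i+1)) := by
        rw [show SS f A p = SS f A (1+(J-1)+1+(p-J-1)) from by
          rw [show 1+(J-1)+1+(p-J-1) = p by omega]]
        rw [SS_split, SS_split, SS_split, SS_one]
        congr 1
        · congr 1
          rw [Finset.sum_range_one]
          rw [show 1+(J-1)+0 = J by omega]
        · apply Finset.sum_congr rfl
          intro i hi
          rw [show 1+(J-1)+1+i = J+1+i by omega]
      have SB : SS f B (p+2)
          = f (B 0, B 1) + (∑ i ∈ Finset.range J, f (B (1+i), B (1+i+1)))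
            + f (B (J+1), B (J+2))
            + ∑ i ∈ Finset.range (p-J), f (B (J+2+i), B (J+2+i+1)) := by
        rw [show SS f B (p+2) = SS f B (1+J+1+(p-J)) from by
          rw [show 1+J+1+(p-J) = p+2 by omega]]
        rw [SS_split, SS_split, SS_split, SS_one]
        congr 1
        · congr 1
          rw [Finset.sum_range_one]
          rw [show 1+J+0 = J+1 by omega, show J+1+1 = J+2 by omega]
        · apply Finset.sum_congr rfl
          intro i hi
          rw [show 1+J+1+i = J+2+i by omega]
      have key1 : f (A 0, B 1) + f (B 0, A 1) ≤ f (A 0, A 1) + f (B 0, B 1) := by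
        apply hsub _ _ _ _ h1 (hB 0 (by omega)) h2
        calc A 1 ≤ A p := hAm 1 p (by omega) le_rfl
          _ = A 0 + 2 * π := hAe
      have key2 : f (A J, B (J+2)) + f (B (J+1), A (J+1))
          ≤ f (A J, A (J+1)) + f (B (J+1), B (J+2)) := by
        apply hsub _ _ _ _ h3 (hB (J+1) (by omega)) h4
        calc A (J+1) ≤ A p := hAm (J+1) p (by omega) le_rfl
          _ = A 0 + 2 * π := hAe
          _ ≤ A J + 2 * π := by
              have := hAm 0 J (by omega) (by omega); linarith
      rw [Su, Sv, SA, SB]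
      linarith [key1, key2]

theorem mem_of_nat (f : ℝ × ℝ → ℝ) (N : ℕ) (t : ℕ → ℝ)
    (hm : ∀ i < N, t i ≤ t (i+1)) (he : t N = t 0 + 2 * π) :
    SS f t N ∈ Pset f N := by
  refine ⟨fun i => t i.val, ?_, ?_, ?_⟩
  · intro i j hij
    exact mono_of_steps hm i.val j.val hij (Nat.lt_succ_iff.mp j.isLt)
  · simpa using he
  · have : ∀ i : Fin N, f ((fun i : Fin (N+1) => t i.val) i.castSucc,
        (fun i : Fin (N+1) => t i.val) i.succ) = f (t i.val, t (i.val + 1)) := by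
      intro i
      simp [Fin.coe_castSucc, Fin.val_succ]
    rw [Finset.sum_congr rfl (fun i _ => this i)]
    rw [SS, ← Fin.sum_univ_eq_sum_range (fun m => f (t m, t (m+1))) N]

theorem nat_of_mem {f : ℝ × ℝ → ℝ} {N : ℕ} {S : ℝ} (hS : S ∈ Pset f N) :
    ∃ t : ℕ → ℝ, (∀ i < N, t i ≤ t (i+1)) ∧ t N = t 0 + 2 * π ∧ S = SS f t N := by
  obtain ⟨tF, hmono, hend, hsum⟩ := hS
  refine ⟨fun i => tF ⟨min i N, by omega⟩, ?_, ?_, ?_⟩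
  · intro i hi
    apply hmono
    rw [Fin.mk_le_mk]
    omega
  · have e1 : min N N = N := Nat.min_self N
    have e2 : min 0 N = 0 := Nat.zero_min N
    simp only [e1, e2]
    convert hend using 3 <;> simp [Fin.ext_iff]
  · rw [hsum, SS, ← Fin.sum_univ_eq_sum_range
      (fun m => f (tF ⟨min m N, by omega⟩, tF ⟨min (m+1) N, by omega⟩)) N]
    apply Finset.sum_congr rfl
    intro i _
    have hi := i.isLt
    congr 2
    · refine congrArg tF (Fin.ext ?_)
      simp only [Fin.coe_castSucc]
      omega
    · refine congrArg tF (Fin.ext ?_)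
      simp only [Fin.val_succ]
      omega

theorem Pset_nonempty (f : ℝ × ℝ → ℝ) (N : ℕ) (hN : 1 ≤ N) : (Pset f N).Nonempty := by
  refine ⟨SS f (fun i => if i = 0 then (0:ℝ) else 2 * π) N, mem_of_nat f N _ ?_ ?_⟩
  · intro i _
    by_cases h : i = 0
    · subst h
      simp only [if_pos rfl, if_neg (by omega : ¬ (0+1 = 0))]
      positivity
    · rw [if_neg h, if_neg (by omega : ¬ (i+1 = 0))]
  · rw [if_neg (by omega : ¬ (N = 0)), if_pos rfl]
    ring

theorem Pset_bddBelow (f : ℝ × ℝ → ℝ) (C : ℝ) (hbd : ∀ a b : ℝ, |f (a, b)| ≤ C)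
    (N : ℕ) : BddBelow (Pset f N) := by
  refine ⟨-((N:ℝ) * C), ?_⟩
  rintro S ⟨tF, -, -, rfl⟩
  have : ∀ i : Fin N, -C ≤ f (tF i.castSucc, tF i.succ) := by
    intro i
    exact (abs_le.mp (hbd _ _)).1
  calc -((N:ℝ) * C) = ∑ _i : Fin N, (-C) := by
        rw [Finset.sum_const, Finset.card_univ, Fintype.card_fin, nsmul_eq_mul]
        ring
    _ ≤ _ := Finset.sum_le_sum (fun i _ => this i)

end DowkerAux

/-- The Dowker-type functional lemma in angle coordinates: if `f` is bounded, vanishes on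
degenerate arcs, is `2π`-periodic and submodular on arcs of the circle, then the sequence
`m_n` of infima of `n`-term cyclic sums is convex. -/
theorem dowker_functional_convex (f : ℝ × ℝ → ℝ) (C : ℝ)
    (hbd : ∀ a b : ℝ, |f (a, b)| ≤ C)
    (hzero : ∀ t : ℝ, f (t, t) = 0)
    (hper : ∀ a b : ℝ, a ≤ b → b ≤ a + 2 * π → f (a + 2 * π, b + 2 * π) = f (a, b))
    (hsub : ∀ a b c d : ℝ, a ≤ b → b ≤ c → c ≤ d → d ≤ a + 2 * π →
      f (a, c) + f (b, d) ≤ f (a, d) + f (b, c))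
    (m : ℕ → ℝ)
    (hm : ∀ n : ℕ, m n = sInf {S : ℝ | ∃ t : Fin (n + 1) → ℝ, Monotone t ∧
      t (Fin.last n) = t 0 + 2 * π ∧
      S = ∑ i : Fin n, f (t i.castSucc, t i.succ)})
    (n : ℕ) (hn : 4 ≤ n) :
    2 * m n ≤ m (n - 1) + m (n + 1) := by
  classical
  obtain ⟨p, rfl⟩ : ∃ p, n = p + 1 := ⟨n - 1, by omega⟩
  have hp3 : 3 ≤ p := by omega
  have hmP : ∀ N, m N = sInf (DowkerAux.Pset f N) := fun N => by
    rw [hm N]; rfl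
  have hne : ∀ N, 1 ≤ N → (DowkerAux.Pset f N).Nonempty := DowkerAux.Pset_nonempty f
  have hbdd : ∀ N, BddBelow (DowkerAux.Pset f N) := DowkerAux.Pset_bddBelow f C hbd
  apply le_of_forall_pos_le_add
  intro ε hε
  have e1 : p + 1 - 1 = p := by omega
  have e2 : p + 1 + 1 = p + 2 := by omega
  rw [e1, e2]
  -- pick a near-optimal (n-1)-chain
  have h2 := Real.lt_sInf_add_pos (hne p (by omega)) (half_pos hε)
  rw [← hmP p] at h2
  obtain ⟨Sa, hSam, hSalt⟩ := h2
  obtain ⟨a, hast, haend, hSa⟩ := DowkerAux.nat_of_mem hSam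
  -- pick a near-optimal (n+1)-chain
  have h3 := Real.lt_sInf_add_pos (hne (p+2) (by omega)) (half_pos hε)
  rw [← hmP (p+2)] at h3
  obtain ⟨Sb, hSbm, hSblt⟩ := h3
  obtain ⟨b, hbst, hbend, hSb⟩ := DowkerAux.nat_of_mem hSbm
  -- translate the (n+1)-chain by an integer multiple of 2π
  have h2pi : (0:ℝ) < 2 * π := by positivity
  set M : ℤ := ⌊(a 0 - b 0) / (2 * π)⌋ with hM
  set B' : ℕ → ℝ := fun i => b i + 2 * π * M with hB'
  have hB'st : ∀ i < p + 2, B' i ≤ B' (i+1) := fun i hi => by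
    simp only [hB']; linarith [hbst i hi]
  have hB'end : B' (p+2) = B' 0 + 2 * π := by simp only [hB']; rw [hbend]; ring
  have harc : ∀ i < p+2, b (i+1) ≤ b i + 2 * π := by
    intro i hi
    have hA1 := DowkerAux.mono_of_steps hbst (i+1) (p+2) (by omega) le_rfl
    have hA0 := DowkerAux.mono_of_steps hbst 0 i (by omega) (by omega)
    rw [hbend] at hA1; linarith
  have hSB' : DowkerAux.SS f B' (p+2) = DowkerAux.SS f b (p+2) := by
    rw [DowkerAux.SS, DowkerAux.SS]
    apply Finset.sum_congr rfl
    intro i hi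
    rw [Finset.mem_range] at hi
    simp only [hB']
    exact DowkerAux.per_int hper M (hbst i hi) (harc i hi)
  have hfloor1 : B' 0 ≤ a 0 := by
    have hf := Int.floor_le ((a 0 - b 0) / (2 * π))
    rw [← hM] at hf
    have hf2 := (le_div_iff₀ h2pi).mp hf
    simp only [hB']; linarith
  have hfloor2 : a 0 < B' 0 + 2 * π := by
    have hf := Int.lt_floor_add_one ((a 0 - b 0) / (2 * π))
    rw [← hM] at hf
    have hf2 := (div_lt_iff₀ h2pi).mp hf
    simp only [hB']; linarith
  -- rotate the (n+1)-chain so that it starts just after a 0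
  have hex : ∃ i, a 0 ≤ B' i := ⟨p+2, by rw [hB'end]; linarith⟩
  set r := Nat.find hex with hr
  have hrle : r ≤ p + 2 := Nat.find_min' hex (by rw [hB'end]; linarith)
  obtain ⟨bb, hbbst, hbbend, hbbSS, hbb1, hbb2⟩ :=
    DowkerAux.rot hper B' (p+2) r (by omega) hrle hB'st hB'end
  have hbb0 : a 0 ≤ bb 0 := by
    have hb0 := hbb1 0 (by omega)
    have e : r + 0 = r := by omega
    rw [e] at hb0
    rw [hb0]
    exact Nat.find_spec hex
  have hbtop : ∀ i ≤ p + 1, bb i ≤ a 0 + 2 * π := by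
    intro i hi
    by_cases hc : i ≤ (p+2) - r
    · rw [hbb1 i hc]
      have h5 := DowkerAux.mono_of_steps hB'st (r+i) (p+2) (by omega) le_rfl
      rw [hB'end] at h5
      linarith
    · rw [hbb2 i (by omega) (by omega)]
      have hidx : i - ((p+2) - r) < r := by omega
      have hnf := Nat.find_min hex hidx
      push_neg at hnf
      linarith [hnf.le]
  -- pigeonhole: find two nested arc pairs
  obtain ⟨j, k, J, hjJ, hkJ, n1, n2, n3, n4⟩ :=
    DowkerAux.find_nest p hp3 a bb hast haend hbbst hbb0 hbtop
  -- rotate both chains so the first nesting starts at index 0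
  obtain ⟨A, hAst, hAend, hASS, hA1, -⟩ :=
    DowkerAux.rot hper a p j (by omega) (by omega) hast haend
  obtain ⟨B, hBst, hBend, hBSS, hB1, -⟩ :=
    DowkerAux.rot hper bb (p+2) k (by omega) (by omega) hbbst hbbend
  have g1 : A 0 ≤ B 0 := by
    rw [hA1 0 (by omega), hB1 0 (by omega)]
    simpa using n1
  have g2 : B 1 ≤ A 1 := by
    rw [hB1 1 (by omega), hA1 1 (by omega)]
    exact n2
  have g3 : A J ≤ B (J+1) := by
    rw [hA1 J (by omega), hB1 (J+1) (by omega)]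
    have e : k + (J+1) = k + J + 1 := by omega
    rw [e]
    exact n3
  have g4 : B (J+2) ≤ A (J+1) := by
    rw [hB1 (J+2) (by omega), hA1 (J+1) (by omega)]
    have e : k + (J+2) = k + J + 2 := by omega
    have e' : j + (J+1) = j + J + 1 := by omega
    rw [e, e']
    exact n4
  obtain ⟨u, v, hust, huend, hvst, hvend, huv⟩ :=
    DowkerAux.combine hsub p J (by omega) A B hAst hAend hBst hBend g1 g2 g3 g4
  have hum := DowkerAux.mem_of_nat f (p+1) u hust huend
  have hvm := DowkerAux.mem_of_nat f (p+1) v hvst hvend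
  have H1 : m (p+1) ≤ DowkerAux.SS f u (p+1) := by
    rw [hmP (p+1)]
    exact csInf_le (hbdd (p+1)) hum
  have H2 : m (p+1) ≤ DowkerAux.SS f v (p+1) := by
    rw [hmP (p+1)]
    exact csInf_le (hbdd (p+1)) hvm
  have hchain : DowkerAux.SS f u (p+1) + DowkerAux.SS f v (p+1) ≤ Sa + Sb := by
    rw [hSa, hSb]
    calc DowkerAux.SS f u (p+1) + DowkerAux.SS f v (p+1)
        ≤ DowkerAux.SS f A p + DowkerAux.SS f B (p+2) := huv
      _ = DowkerAux.SS f a p + DowkerAux.SS f b (p+2) := by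
          rw [hASS, hBSS, hbbSS, hSB']
  linarith [H1, H2, hchain, hSalt, hSblt]
end

section
/- Let r > 0 and λ > 0, let p ∈ ℝ² with ‖p‖ ≥ r, and let u be a unit vector orthogonal to p. For s > 0 set p(s) := p + s·u, and for 0 < s₁ < s₂ let T(s₁, s₂) := conv{0, p(s₁), p(s₂)}. Then ρ(B, T(s₁, s₂)) is nonincreasing in each variable: for all 0 < s₁ ≤ s₁' < s₂ ≤ s₂' one has ρ(B, T(s₁, s₂)) ≥ ρ(B, T(s₁', s₂')). -/
open MeasureTheory Set Metric RealInnerProductSpace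

open intervalIntegral Real

lemma avg_right {g : ℝ → ℝ} {a b b' : ℝ} (hab : a < b) (hbb : b ≤ b')
    (hm : MonotoneOn g (Icc a b')) :
    (∫ x in a..b, g x) * (b' - a) ≤ (∫ x in a..b', g x) * (b - a) := by
  have hab' : a ≤ b' := hab.le.trans hbb
  have hint : ∀ c d, a ≤ c → c ≤ d → d ≤ b' → IntervalIntegrable g volume c d := by
    intro c d h1 h2 h3
    have h := hm.mono (Icc_subset_Icc h1 h3)
    rw [← uIcc_of_le h2] at h
    exact h.intervalIntegrable
  have hsplit : (∫ x in a..b', g x) = (∫ x in a..b, g x) + ∫ x in b..b', g x :=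
    (integral_add_adjacent_intervals (hint a b le_rfl hab.le hbb)
      (hint b b' hab.le hbb le_rfl)).symm
  have h1 : (∫ x in a..b, g x) ≤ (b - a) * g b := by
    calc (∫ x in a..b, g x) ≤ ∫ x in a..b, g b := by
          apply integral_mono_on hab.le (hint a b le_rfl hab.le hbb)
            (intervalIntegrable_const)
          intro x hx
          exact hm ⟨hx.1, hx.2.trans hbb⟩ ⟨hab.le, hbb⟩ hx.2
      _ = (b - a) * g b := by simp [mul_comm]
  have h2 : (b' - b) * g b ≤ ∫ x in b..b', g x := by
    calc (b' - b) * g b = ∫ x in b..b', g b := by simp [mul_comm]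
      _ ≤ ∫ x in b..b', g x := by
          apply integral_mono_on hbb intervalIntegrable_const (hint b b' hab.le hbb le_rfl)
          intro x hx
          exact hm ⟨hab.le, hbb⟩ ⟨hab.le.trans hx.1, hx.2⟩ hx.1
  have key : (∫ x in a..b, g x) * (b' - b) ≤ (∫ x in b..b', g x) * (b - a) := by
    calc (∫ x in a..b, g x) * (b' - b) ≤ ((b - a) * g b) * (b' - b) := by
          apply mul_le_mul_of_nonneg_right h1 (by linarith)
      _ = ((b' - b) * g b) * (b - a) := by ring
      _ ≤ (∫ x in b..b', g x) * (b - a) := by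
          apply mul_le_mul_of_nonneg_right h2 (by linarith)
  nlinarith [key, hsplit]

lemma avg_left {g : ℝ → ℝ} {a a' b : ℝ} (haa : a ≤ a') (hab : a' < b)
    (hm : MonotoneOn g (Icc a b)) :
    (∫ x in a..b, g x) * (b - a') ≤ (∫ x in a'..b, g x) * (b - a) := by
  have hab' : a ≤ b := haa.trans hab.le
  have hint : ∀ c d, a ≤ c → c ≤ d → d ≤ b → IntervalIntegrable g volume c d := by
    intro c d h1 h2 h3
    have h := hm.mono (Icc_subset_Icc h1 h3)
    rw [← uIcc_of_le h2] at h
    exact h.intervalIntegrable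
  have hsplit : (∫ x in a..b, g x) = (∫ x in a..a', g x) + ∫ x in a'..b, g x :=
    (integral_add_adjacent_intervals (hint a a' le_rfl haa hab.le)
      (hint a' b haa hab.le le_rfl)).symm
  have h1 : (∫ x in a..a', g x) ≤ (a' - a) * g a' := by
    calc (∫ x in a..a', g x) ≤ ∫ x in a..a', g a' := by
          apply integral_mono_on haa (hint a a' le_rfl haa hab.le) intervalIntegrable_const
          intro x hx
          exact hm ⟨hx.1, hx.2.trans hab.le⟩ ⟨haa, hab.le⟩ hx.2
      _ = (a' - a) * g a' := by simp [mul_comm]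
  have h2 : (b - a') * g a' ≤ ∫ x in a'..b, g x := by
    calc (b - a') * g a' = ∫ x in a'..b, g a' := by simp [mul_comm]
      _ ≤ ∫ x in a'..b, g x := by
          apply integral_mono_on hab.le intervalIntegrable_const (hint a' b haa hab.le le_rfl)
          intro x hx
          exact hm ⟨haa, hab.le⟩ ⟨haa.trans hx.1, hx.2⟩ hx.1
  have key : (∫ x in a..a', g x) * (b - a') ≤ (∫ x in a'..b, g x) * (a' - a) := by
    calc (∫ x in a..a', g x) * (b - a') ≤ ((a' - a) * g a') * (b - a') := by
          apply mul_le_mul_of_nonneg_right h1 (by linarith)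
      _ = ((b - a') * g a') * (a' - a) := by ring
      _ ≤ (∫ x in a'..b, g x) * (a' - a) := by
          apply mul_le_mul_of_nonneg_right h2 (by linarith)
  nlinarith [key, hsplit]

/-- Main 1-D lemma: for `g` monotone and bounded below by `c > 0`,
`(b-a)/∫_a^b g` is antitone in both endpoints. -/
lemma ratio_antitone {g : ℝ → ℝ} {a a' b b' c : ℝ} (hc : 0 < c)
    (haa : a ≤ a') (hab : a' < b) (hbb : b ≤ b')
    (hm : MonotoneOn g (Icc a b')) (hgc : ∀ x ∈ Icc a b', c ≤ g x) :
    (b' - a') / (∫ x in a'..b', g x) ≤ (b - a) / (∫ x in a..b, g x) := by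
  have hab0 : a < b := lt_of_le_of_lt haa hab
  have hint : ∀ {u v}, a ≤ u → u ≤ v → v ≤ b' → IntervalIntegrable g volume u v := by
    intro u v h1 h2 h3
    have h := hm.mono (Icc_subset_Icc h1 h3)
    rw [← uIcc_of_le h2] at h
    exact h.intervalIntegrable
  have hpos : ∀ {u v}, a ≤ u → u < v → v ≤ b' → 0 < ∫ x in u..v, g x := by
    intro u v h1 h2 h3
    have : (v - u) * c ≤ ∫ x in u..v, g x := by
      calc (v - u) * c = ∫ x in u..v, c := by simp [mul_comm]
        _ ≤ ∫ x in u..v, g x := by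
            apply integral_mono_on h2.le intervalIntegrable_const (hint h1 h2.le h3)
            intro x hx
            exact hgc x ⟨h1.trans hx.1, hx.2.trans h3⟩
    nlinarith
  have P1 : 0 < ∫ x in a..b, g x := hpos le_rfl hab0 hbb
  have P2 : 0 < ∫ x in a'..b', g x := hpos haa (hab.trans_le hbb) le_rfl
  rw [div_le_div_iff₀ P2 P1]
  -- chain through (a, b')
  have step1 : (∫ x in a..b, g x) * (b' - a) ≤ (∫ x in a..b', g x) * (b - a) :=
    avg_right hab0 hbb hm
  have step2 : (∫ x in a..b', g x) * (b' - a') ≤ (∫ x in a'..b', g x) * (b' - a) := by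
    exact avg_left haa (hab.trans_le hbb) hm
  have P3 : 0 < ∫ x in a..b', g x := hpos le_rfl (hab0.trans_le hbb) le_rfl
  nlinarith [step1, step2, mul_le_mul_of_nonneg_left step2 P1.le]

private lemma isLin (a b : ℝ) : IsLinearMap ℝ (fun z : ℝ × ℝ => a * z.1 + b * z.2) := by
  constructor
  · intro x y; simp [Prod.fst_add, Prod.snd_add]; ring
  · intro c x; simp [Prod.smul_fst, Prod.smul_snd, smul_eq_mul]; ring

/-- The closed triangle with vertices `0, (h,s₁), (h,s₂)` as an intersection of halfplanes. -/
lemma triangle_eq {h s₁ s₂ : ℝ} (hh : 0 < h) (hs : s₁ ≤ s₂) :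
    convexHull ℝ {((0 : ℝ), (0 : ℝ)), (h, s₁), (h, s₂)} =
      {z : ℝ × ℝ | 0 ≤ z.1 ∧ z.1 ≤ h ∧ s₁ * z.1 ≤ h * z.2 ∧ h * z.2 ≤ s₂ * z.1} := by
  apply Subset.antisymm
  · apply convexHull_min
    · rintro z (rfl | rfl | rfl) <;> refine ⟨?_, ?_, ?_, ?_⟩ <;> simp <;> nlinarith
    · have e : {z : ℝ × ℝ | 0 ≤ z.1 ∧ z.1 ≤ h ∧ s₁ * z.1 ≤ h * z.2 ∧ h * z.2 ≤ s₂ * z.1} =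
          {z : ℝ × ℝ | 0 ≤ 1 * z.1 + 0 * z.2} ∩ {z | 1 * z.1 + 0 * z.2 ≤ h} ∩
            {z | 0 ≤ (-s₁) * z.1 + h * z.2} ∩ {z | 0 ≤ s₂ * z.1 + (-h) * z.2} := by
        ext z
        simp only [mem_setOf_eq, mem_inter_iff]
        constructor
        · rintro ⟨a, b, c, d⟩; refine ⟨⟨⟨by linarith, by linarith⟩, by linarith⟩, by linarith⟩
        · rintro ⟨⟨⟨a, b⟩, c⟩, d⟩; exact ⟨by linarith, by linarith, by linarith, by linarith⟩
      rw [e]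
      exact (((convex_halfSpace_ge (isLin 1 0) 0).inter
        (convex_halfSpace_le (isLin 1 0) h)).inter
        (convex_halfSpace_ge (isLin (-s₁) h) 0)).inter
        (convex_halfSpace_ge (isLin s₂ (-h)) 0)
  · rintro ⟨x, y⟩ ⟨hx0, hxh, hy1, hy2⟩
    rw [show ({((0 : ℝ), (0 : ℝ)), (h, s₁), (h, s₂)} : Set (ℝ × ℝ)) =
        insert ((0 : ℝ), (0 : ℝ)) {(h, s₁), (h, s₂)} from rfl,
      convexHull_insert ⟨_, mem_insert _ _⟩]
    rw [mem_convexJoin]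
    rcases eq_or_lt_of_le hx0 with hx | hx
    · have hy : y = 0 := by
        have h1 : h * y ≤ 0 := by rw [← hx] at hy2; simpa using hy2
        have h2 : 0 ≤ h * y := by rw [← hx] at hy1; simpa using hy1
        nlinarith
      refine ⟨(0,0), mem_singleton _, (h, s₁), subset_convexHull ℝ _ (by simp), ?_⟩
      subst hy
      obtain rfl : x = 0 := hx.symm
      exact left_mem_segment ℝ _ _
    · -- x > 0 : point = (x/h) • (h, h*y/x)
      have hx' : x ≠ 0 := by positivity
      have hh' : h ≠ 0 := ne_of_gt hh
      refine ⟨(0,0), mem_singleton _, (h, h * y / x), ?_, ?_⟩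
      · rw [convexHull_pair]
        rcases eq_or_lt_of_le hs with hss | hss
        · have : h * y / x = s₁ := by
            rw [← hss] at hy2
            have : h * y = s₁ * x := le_antisymm hy2 hy1
            rw [this]; field_simp
          rw [this]
          exact left_mem_segment ℝ _ _
        · have hd : s₂ - s₁ ≠ 0 := ne_of_gt (by linarith)
          refine ⟨(s₂ - h * y / x) / (s₂ - s₁), (h * y / x - s₁) / (s₂ - s₁), ?_, ?_, ?_, ?_⟩
          · apply div_nonneg _ (by linarith)
            have : h * y / x ≤ s₂ := by rw [div_le_iff₀ hx]; linarith
            linarith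
          · apply div_nonneg _ (by linarith)
            have : s₁ ≤ h * y / x := by rw [le_div_iff₀ hx]; linarith
            linarith
          · field_simp; ring
          · simp only [Prod.smul_mk, smul_eq_mul, Prod.mk_add_mk, Prod.mk.injEq]
            constructor
            · field_simp; ring
            · field_simp; ring
      · refine ⟨1 - x / h, x / h, by rw [sub_nonneg, div_le_one hh]; exact hxh,
          by positivity, by ring, ?_⟩
        simp only [Prod.smul_mk, smul_eq_mul, smul_zero, Prod.mk_add_mk, Prod.mk.injEq,
          mul_zero, zero_add]
        constructor
        · field_simp
        · field_simp

/-- Membership of a polar point in the truncated triangle. -/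
lemma polar_mem_iff {h s₁ s₂ ρ t α : ℝ} (hh : 0 < h) (h1 : 0 < s₁) (hs : s₁ ≤ s₂)
    (hρ : 0 < ρ) (ht : 0 < t) (hα : α ∈ Ioo (-π) π) :
    ((t * cos α, t * sin α) ∈
      ({z : ℝ × ℝ | 0 ≤ z.1 ∧ z.1 ≤ h ∧ s₁ * z.1 ≤ h * z.2 ∧ h * z.2 ≤ s₂ * z.1} ∩
        {z : ℝ × ℝ | z.1 ^ 2 + z.2 ^ 2 ≤ ρ ^ 2})) ↔
    (α ∈ Icc (arctan (s₁ / h)) (arctan (s₂ / h)) ∧ t ≤ min ρ (h / cos α)) := by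
  have hsq : (t * cos α) ^ 2 + (t * sin α) ^ 2 = t ^ 2 := by
    have := sin_sq_add_cos_sq α; nlinarith [this]
  constructor
  · rintro ⟨⟨hc0, hch, hl, hr⟩, hball⟩
    simp only [mem_setOf_eq] at hc0 hch hl hr hball
    have hc : 0 ≤ cos α := by
      by_contra hneg
      push_neg at hneg
      nlinarith [hc0]
    have hcos : 0 < cos α := by
      rcases hc.lt_or_eq with h' | h'
      · exact h'
      · exfalso
        rw [← h'] at hl hr
        simp only [mul_zero, zero_mul] at hl hr
        have hs0 : sin α = 0 := by nlinarith [mul_pos hh ht]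
        have := sin_sq_add_cos_sq α
        rw [hs0, ← h'] at this
        norm_num at this
    have hαlt : -(π/2) < α ∧ α < π/2 := by
      constructor
      · by_contra hcon
        push_neg at hcon
        have : cos α ≤ 0 := by
          have := cos_nonpos_of_pi_div_two_le_of_le (x := -α) (by linarith)
            (by linarith [hα.1, pi_pos])
          rwa [cos_neg] at this
        linarith
      · by_contra hcon
        push_neg at hcon
        exact absurd (cos_nonpos_of_pi_div_two_le_of_le hcon (by linarith [hα.2, pi_pos]))
          (by linarith)
    have htan1 : s₁ / h ≤ tan α := by
      rw [tan_eq_sin_div_cos, div_le_div_iff₀ hh hcos]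
      nlinarith [hl]
    have htan2 : tan α ≤ s₂ / h := by
      rw [tan_eq_sin_div_cos, div_le_div_iff₀ hcos hh]
      nlinarith [hr]
    refine ⟨⟨?_, ?_⟩, le_min ?_ ?_⟩
    · calc arctan (s₁ / h) ≤ arctan (tan α) := arctan_strictMono.monotone htan1
        _ = α := arctan_tan hαlt.1 hαlt.2
    · calc α = arctan (tan α) := (arctan_tan hαlt.1 hαlt.2).symm
        _ ≤ arctan (s₂ / h) := arctan_strictMono.monotone htan2
    · nlinarith [hball, hsq]
    · rw [le_div_iff₀ hcos]; exact hch
  · rintro ⟨⟨ha1, ha2⟩, htle⟩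
    have hαmem : α ∈ Ioo (-(π/2)) (π/2) := by
      constructor
      · calc -(π/2) < arctan (s₁ / h) := neg_pi_div_two_lt_arctan _
          _ ≤ α := ha1
      · calc α ≤ arctan (s₂ / h) := ha2
          _ < π/2 := arctan_lt_pi_div_two _
    have hcos : 0 < cos α := cos_pos_of_mem_Ioo hαmem
    have htan1 : s₁ / h ≤ tan α := by
      calc s₁ / h = tan (arctan (s₁ / h)) := (tan_arctan _).symm
        _ ≤ tan α := strictMonoOn_tan.monotoneOn
            (by constructor <;> [exact neg_pi_div_two_lt_arctan _; exact arctan_lt_pi_div_two _])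
            ⟨hαmem.1, hαmem.2⟩ ha1
    have htan2 : tan α ≤ s₂ / h := by
      calc tan α ≤ tan (arctan (s₂ / h)) := strictMonoOn_tan.monotoneOn
            ⟨hαmem.1, hαmem.2⟩
            (by constructor <;> [exact neg_pi_div_two_lt_arctan _; exact arctan_lt_pi_div_two _])
            ha2
        _ = s₂ / h := tan_arctan _
    rw [tan_eq_sin_div_cos, div_le_div_iff₀ hh hcos] at htan1
    rw [tan_eq_sin_div_cos, div_le_div_iff₀ hcos hh] at htan2
    have htρ : t ≤ ρ := htle.trans (min_le_left _ _)
    have htc : t * cos α ≤ h := by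
      have := htle.trans (min_le_right _ _)
      rwa [le_div_iff₀ hcos] at this
    refine ⟨⟨by positivity, htc, ?_, ?_⟩, ?_⟩
    · simp only [mem_setOf_eq]; nlinarith [htan1]
    · simp only [mem_setOf_eq]; nlinarith [htan2]
    · simp only [mem_setOf_eq]; nlinarith [hsq]

lemma volume_tri_inter_disk {h s₁ s₂ ρ : ℝ} (hh : 0 < h) (h1 : 0 < s₁) (hs : s₁ ≤ s₂)
    (hρ : 0 < ρ) :
    volume (({z : ℝ × ℝ | 0 ≤ z.1 ∧ z.1 ≤ h ∧ s₁ * z.1 ≤ h * z.2 ∧ h * z.2 ≤ s₂ * z.1} ∩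
        {z : ℝ × ℝ | z.1 ^ 2 + z.2 ^ 2 ≤ ρ ^ 2})) =
    ENNReal.ofReal (∫ α in arctan (s₁ / h)..arctan (s₂ / h), (min ρ (h / cos α)) ^ 2 / 2) := by
  have h0a₁ : 0 < arctan (s₁ / h) := by
    rw [← arctan_zero]; exact arctan_strictMono (by positivity)
  have ha₁₂ : arctan (s₁ / h) ≤ arctan (s₂ / h) :=
    arctan_strictMono.monotone (by gcongr)
  have ha₂pi : arctan (s₂ / h) < π / 2 := arctan_lt_pi_div_two _
  set a₁ := arctan (s₁ / h)
  set a₂ := arctan (s₂ / h)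
  have hcosal : ∀ α ∈ Icc a₁ a₂, 0 < cos α := fun α hα =>
    cos_pos_of_mem_Ioo ⟨lt_of_lt_of_le (by linarith [pi_pos]) hα.1, lt_of_le_of_lt hα.2 ha₂pi⟩
  have hmpos : ∀ α ∈ Icc a₁ a₂, 0 < min ρ (h / cos α) := fun α hα =>
    lt_min hρ (div_pos hh (hcosal α hα))
  set T := {z : ℝ × ℝ | 0 ≤ z.1 ∧ z.1 ≤ h ∧ s₁ * z.1 ≤ h * z.2 ∧ h * z.2 ≤ s₂ * z.1} with hT
  set D := {z : ℝ × ℝ | z.1 ^ 2 + z.2 ^ 2 ≤ ρ ^ 2} with hD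
  -- `T ∩ D` is compact, hence measurable with finite volume
  have hTc : IsClosed T := by
    rw [hT]
    show IsClosed ({z : ℝ × ℝ | 0 ≤ z.1} ∩ ({z | z.1 ≤ h} ∩
      ({z | s₁ * z.1 ≤ h * z.2} ∩ {z | h * z.2 ≤ s₂ * z.1})))
    exact (isClosed_le continuous_const continuous_fst).inter
      ((isClosed_le continuous_fst continuous_const).inter
      ((isClosed_le (continuous_const.mul continuous_fst)
        (continuous_const.mul continuous_snd)).inter
      (isClosed_le (continuous_const.mul continuous_snd)
        (continuous_const.mul continuous_fst))))
  have hDc : IsClosed D :=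
    isClosed_le (by continuity) continuous_const
  have hSc : IsClosed (T ∩ D) := hTc.inter hDc
  have hSb : IsCompact (T ∩ D) := by
    apply Metric.isCompact_of_isClosed_isBounded hSc
    apply Bornology.IsBounded.subset (Metric.isBounded_closedBall (x := (0 : ℝ × ℝ)) (r := ρ))
    rintro ⟨x, y⟩ ⟨-, hxy⟩
    simp only [hD, mem_setOf_eq] at hxy
    rw [Metric.mem_closedBall]
    have hx : |x| ≤ ρ := by
      rw [abs_le]; constructor <;> nlinarith [sq_nonneg y, sq_nonneg x]
    have hy : |y| ≤ ρ := by
      rw [abs_le]; constructor <;> nlinarith [sq_nonneg y, sq_nonneg x]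
    calc dist ((x, y) : ℝ × ℝ) 0 = max (dist x 0) (dist y 0) := rfl
      _ ≤ ρ := by
        simp only [Real.dist_eq, sub_zero]
        exact max_le hx hy
  have hSm : MeasurableSet (T ∩ D) := hSc.measurableSet
  have hfin : volume (T ∩ D) ≠ ⊤ := hSb.measure_lt_top.ne
  -- the region in polar coordinates
  set E := {q : ℝ × ℝ | q.2 ∈ Icc a₁ a₂ ∧ q.1 ∈ Ioc 0 (min ρ (h / cos q.2))} with hE
  have hEmeas : MeasurableSet E := by
    have : E = (Prod.snd ⁻¹' Icc a₁ a₂) ∩ ((Prod.fst ⁻¹' Ioi 0) ∩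
        {q : ℝ × ℝ | q.1 ≤ min ρ (h / cos q.2)}) := by
      ext q; simp only [hE, mem_setOf_eq, mem_inter_iff, mem_preimage, mem_Icc, mem_Ioc,
        mem_Ioi]
    rw [this]
    refine (measurable_snd measurableSet_Icc).inter
      ((measurable_fst measurableSet_Ioi).inter ?_)
    have hm : Measurable fun q : ℝ × ℝ => min ρ (h / cos q.2) - q.1 :=
      (measurable_const.min (measurable_const.div (Real.continuous_cos.measurable.comp
        measurable_snd))).sub measurable_fst
    have : {q : ℝ × ℝ | q.1 ≤ min ρ (h / cos q.2)} =
        (fun q : ℝ × ℝ => min ρ (h / cos q.2) - q.1) ⁻¹' Ici 0 := by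
      ext q; simp [sub_nonneg]
    rw [this]
    exact hm measurableSet_Ici
  have hEsub : E ⊆ polarCoord.target := by
    rintro ⟨t, α⟩ ⟨hα, ht⟩
    constructor
    · exact ht.1
    · exact ⟨by dsimp; linarith [hα.1, pi_pos, h0a₁],
        by dsimp; linarith [hα.2, ha₂pi, pi_pos]⟩
  -- pointwise identity on the target
  have hpoint : ∀ p ∈ polarCoord.target,
      p.1 • (T ∩ D).indicator (1 : ℝ × ℝ → ℝ) (polarCoord.symm p) =
        E.indicator (fun q : ℝ × ℝ => q.1) p := by
    rintro ⟨t, α⟩ ⟨ht, hα⟩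
    have ht' : (0 : ℝ) < t := ht
    have hsymm : polarCoord.symm (t, α) = (t * cos α, t * sin α) := rfl
    have hiff := polar_mem_iff (ρ := ρ) hh h1 hs hρ ht' hα
    rw [hsymm]
    by_cases hin : (t * cos α, t * sin α) ∈ T ∩ D
    · have hmemE : ((t, α) : ℝ × ℝ) ∈ E := ⟨(hiff.mp hin).1, ht', (hiff.mp hin).2⟩
      rw [indicator_of_mem hin, indicator_of_mem hmemE]
      simp
    · have hnE : ((t, α) : ℝ × ℝ) ∉ E := by
        rintro ⟨hαm, htm⟩
        exact hin (hiff.mpr ⟨hαm, htm.2⟩)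
      rw [indicator_of_notMem hin, indicator_of_notMem hnE]
      simp
  -- integrability of the indicator over the plane
  have hbound : MeasureTheory.Integrable
      ((Ioc 0 ρ ×ˢ Icc a₁ a₂).indicator fun _ : ℝ × ℝ => ρ) := by
    rw [integrable_indicator_iff (measurableSet_Ioc.prod measurableSet_Icc)]
    apply (integrableOn_const_iff).mpr
    right
    rw [Measure.volume_eq_prod, Measure.prod_prod]
    exact ENNReal.mul_lt_top measure_Ioc_lt_top measure_Icc_lt_top
  have hint : MeasureTheory.Integrable (E.indicator fun q : ℝ × ℝ => q.1) := by
    apply MeasureTheory.Integrable.mono' hbound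
    · exact (measurable_fst.indicator hEmeas).aestronglyMeasurable
    · apply Filter.Eventually.of_forall
      rintro ⟨t, α⟩
      by_cases hin : ((t, α) : ℝ × ℝ) ∈ E
      · obtain ⟨hαm, htm⟩ := hin
        have hmemB : ((t, α) : ℝ × ℝ) ∈ Ioc 0 ρ ×ˢ Icc a₁ a₂ :=
          ⟨⟨htm.1, htm.2.trans (min_le_left _ _)⟩, hαm⟩
        have hmemE2 : ((t, α) : ℝ × ℝ) ∈ E := ⟨hαm, htm⟩
        rw [indicator_of_mem hmemE2, indicator_of_mem hmemB]
        simp only [norm_eq_abs]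
        rw [abs_of_pos htm.1]
        exact htm.2.trans (min_le_left _ _)
      · rw [indicator_of_notMem hin]
        simp only [norm_zero]
        apply indicator_apply_nonneg
        intro; exact hρ.le
  -- inner integral
  have hinner : ∀ α : ℝ, (∫ t : ℝ, E.indicator (fun q : ℝ × ℝ => q.1) (t, α)) =
      (Icc a₁ a₂).indicator (fun α => (min ρ (h / cos α)) ^ 2 / 2) α := by
    intro α
    by_cases hα : α ∈ Icc a₁ a₂
    · have heq : (fun t : ℝ => E.indicator (fun q : ℝ × ℝ => q.1) (t, α)) =
          (Ioc 0 (min ρ (h / cos α))).indicator (fun x => x) := by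
        funext t
        by_cases htm : t ∈ Ioc (0 : ℝ) (min ρ (h / cos α))
        · have hmemE3 : ((t, α) : ℝ × ℝ) ∈ E := ⟨hα, htm⟩
          rw [indicator_of_mem htm]
          exact indicator_of_mem hmemE3 _
        · rw [indicator_of_notMem htm, indicator_of_notMem]
          rintro ⟨-, htm'⟩
          exact htm htm'
      rw [heq, indicator_of_mem hα]
      rw [MeasureTheory.integral_indicator measurableSet_Ioc,
        ← intervalIntegral.integral_of_le (hmpos α hα).le]
      rw [integral_id]
      ring
    · rw [indicator_of_notMem hα]
      have heq : (fun t : ℝ => E.indicator (fun q : ℝ × ℝ => q.1) (t, α)) = fun _ => 0 := by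
        funext t
        rw [indicator_of_notMem]
        rintro ⟨hαm, -⟩
        exact hα hαm
      rw [heq, MeasureTheory.integral_zero]
  -- put everything together
  have key : (volume (T ∩ D)).toReal =
      ∫ α in a₁..a₂, (min ρ (h / cos α)) ^ 2 / 2 := by
    rw [← measureReal_def, ← MeasureTheory.integral_indicator_one hSm]
    rw [← integral_comp_polarCoord_symm]
    rw [MeasureTheory.setIntegral_congr_fun polarCoord.open_target.measurableSet hpoint]
    rw [MeasureTheory.setIntegral_eq_integral_of_forall_compl_eq_zero
      (fun p hp => indicator_of_notMem (fun hpE => hp (hEsub hpE)) _)]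
    rw [Measure.volume_eq_prod] at hint ⊢
    rw [MeasureTheory.integral_prod _ hint]
    rw [MeasureTheory.integral_integral_swap (by exact hint)]
    simp_rw [hinner]
    rw [MeasureTheory.integral_indicator measurableSet_Icc,
      MeasureTheory.integral_Icc_eq_integral_Ioc,
      ← intervalIntegral.integral_of_le ha₁₂]
  rw [← key, ENNReal.ofReal_toReal hfin]

set_option maxHeartbeats 2000000 in
/-- Monotonicity of the truncated density `ρ(B, T(s₁,s₂))` of triangles with apex at the
center of the disk `B`: for `0 < s₁ ≤ s₁' < s₂ ≤ s₂'`,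
`ρ(B, T(s₁', s₂')) ≤ ρ(B, T(s₁, s₂))`, where `T(s₁,s₂) = conv{0, p + s₁u, p + s₂u}`,
`ρ(B, T) = area(T ∩ B)/area(T ∩ B_λ)`. -/
theorem rho_antitone (r lam : ℝ) (hr : 0 < r) (hlam : 0 < lam)
    (p u : EuclideanSpace ℝ (Fin 2)) (hp : r ≤ ‖p‖) (hu : ‖u‖ = 1) (hpu : ⟪p, u⟫ = 0)
    (s₁ s₁' s₂ s₂' : ℝ) (h0 : 0 < s₁) (h1 : s₁ ≤ s₁') (h2 : s₁' < s₂) (h3 : s₂ ≤ s₂') :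
    (volume (convexHull ℝ {0, p + s₁' • u, p + s₂' • u} ∩ closedBall 0 r)).toReal /
      (volume (convexHull ℝ {0, p + s₁' • u, p + s₂' • u} ∩
        closedBall 0 ((1 + lam) * r))).toReal ≤
    (volume (convexHull ℝ {0, p + s₁ • u, p + s₂ • u} ∩ closedBall 0 r)).toReal /
      (volume (convexHull ℝ {0, p + s₁ • u, p + s₂ • u} ∩
        closedBall 0 ((1 + lam) * r))).toReal := by
  classical
  have hh : (0 : ℝ) < ‖p‖ := hr.trans_le hp
  have hpne : p ≠ 0 := by
    intro h0'
    rw [h0', norm_zero] at hh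
    exact lt_irrefl _ hh
  set h := ‖p‖ with hhdef
  set c : EuclideanSpace ℝ (Fin 2) := ‖p‖⁻¹ • p with hc
  have hcnorm : ‖c‖ = 1 := by
    rw [hc, norm_smul, norm_inv, norm_norm, inv_mul_cancel₀ hh.ne']
  have hcu : ⟪c, u⟫ = 0 := by rw [hc, real_inner_smul_left, hpu, mul_zero]
  set v : Fin 2 → EuclideanSpace ℝ (Fin 2) := ![c, u] with hv
  have hon : Orthonormal ℝ v := by
    constructor
    · intro i; fin_cases i <;> simp [hv, hcnorm, hu]
    · intro i j hij
      fin_cases i <;> fin_cases j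
      · exact absurd rfl hij
      · simpa only [hv, Matrix.cons_val_zero, Matrix.cons_val_one, Matrix.head_cons, Fin.zero_eta,
            Fin.mk_one] using hcu
      · rw [hv]
        simp only [Matrix.cons_val_zero, Matrix.cons_val_one, Matrix.head_cons]
        rw [real_inner_comm]
        exact hcu
      · exact absurd rfl hij
  have hcard : Fintype.card (Fin 2) = Module.finrank ℝ (EuclideanSpace ℝ (Fin 2)) := by
    simp [finrank_euclideanSpace]
  have hsp : ⊤ ≤ Submodule.span ℝ (Set.range v) := by
    have hb := (basisOfLinearIndependentOfCardEqFinrank hon.linearIndependent hcard).span_eq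
    rw [coe_basisOfLinearIndependentOfCardEqFinrank] at hb
    rw [hb]
  set b : OrthonormalBasis (Fin 2) ℝ (EuclideanSpace ℝ (Fin 2)) := OrthonormalBasis.mk hon hsp
    with hbdef
  have hb0 : b 0 = c := by rw [hbdef, OrthonormalBasis.coe_mk]; rfl
  have hb1 : b 1 = u := by rw [hbdef, OrthonormalBasis.coe_mk]; rfl
  -- the measure-preserving parametrization of the plane
  set Ψ : ℝ × ℝ → EuclideanSpace ℝ (Fin 2) := fun z => z.1 • c + z.2 • u with hΨdef
  have hcomp : Ψ = (b.repr.symm ∘ ⇑(MeasurableEquiv.toLp 2 (Fin 2 → ℝ)) ∘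
      ⇑(MeasurableEquiv.finTwoArrow (α := ℝ)).symm) := by
    funext z
    simp only [Function.comp_apply]
    have e1 : (MeasurableEquiv.toLp 2 (Fin 2 → ℝ))
          ((MeasurableEquiv.finTwoArrow (α := ℝ)).symm z) =
        EuclideanSpace.single 0 z.1 + EuclideanSpace.single 1 z.2 := by
      ext i
      fin_cases i <;>
        simp [EuclideanSpace.single_apply,
          MeasurableEquiv.finTwoArrow_symm_apply]
    have hsing : ∀ (i : Fin 2) (a : ℝ),
        b.repr.symm (EuclideanSpace.single i a) = a • b i := by
      intro i a
      have hsa : EuclideanSpace.single i a = a • EuclideanSpace.single i (1 : ℝ) := by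
        ext j
        simp [EuclideanSpace.single_apply, mul_ite]
      rw [hsa, LinearIsometryEquiv.map_smul, OrthonormalBasis.repr_symm_single]
    rw [e1, map_add, hsing, hsing, hb0, hb1]
  have hΨmp : MeasurePreserving Ψ volume volume := by
    rw [hcomp]
    exact b.measurePreserving_repr_symm.comp
      (((EuclideanSpace.volume_preserving_symm_measurableEquiv_toLp (Fin 2)).symm _).comp
        ((volume_preserving_finTwoArrow ℝ).symm _))
  have hinj : Function.Injective Ψ := by
    rw [hcomp]
    exact b.repr.symm.injective.comp
      ((MeasurableEquiv.toLp 2 (Fin 2 → ℝ)).injective.comp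
        (MeasurableEquiv.finTwoArrow (α := ℝ)).symm.injective)
  have hlin : IsLinearMap ℝ Ψ := by
    constructor
    · intro z w
      simp only [hΨdef, Prod.fst_add, Prod.snd_add, add_smul]
      abel
    · intro m z
      simp only [hΨdef, Prod.smul_fst, Prod.smul_snd, smul_eq_mul, mul_smul, smul_add]
  -- preimages of balls and hulls
  have hball : ∀ ρ : ℝ, 0 ≤ ρ → Ψ ⁻¹' (closedBall 0 ρ) =
      {z : ℝ × ℝ | z.1 ^ 2 + z.2 ^ 2 ≤ ρ ^ 2} := by
    intro ρ hρ
    ext z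
    have hns : ‖Ψ z‖ ^ 2 = z.1 ^ 2 + z.2 ^ 2 := by
      have hn1 : ‖z.1 • c‖ = |z.1| := by
        rw [norm_smul, hcnorm, mul_one, Real.norm_eq_abs]
      have hn2 : ‖z.2 • u‖ = |z.2| := by
        rw [norm_smul, hu, mul_one, Real.norm_eq_abs]
      have hn3 : ⟪z.1 • c, z.2 • u⟫ = 0 := by
        rw [real_inner_smul_left, real_inner_smul_right, hcu]
        ring
      rw [hΨdef]
      simp only
      rw [norm_add_sq_real, hn1, hn2, hn3]
      simp [sq_abs]
    simp only [Set.mem_preimage, Metric.mem_closedBall, dist_zero_right, Set.mem_setOf_eq]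
    constructor
    · intro hle
      rw [← hns]
      nlinarith [norm_nonneg (Ψ z)]
    · intro hle
      rw [← hns] at hle
      nlinarith [norm_nonneg (Ψ z)]
  have hΨ00 : Ψ (0, 0) = 0 := by simp [hΨdef]
  have hΨh : ∀ s : ℝ, Ψ (h, s) = p + s • u := by
    intro s
    simp only [hΨdef, hc]
    rw [smul_smul, mul_inv_cancel₀ hh.ne', one_smul]
  have hhull : ∀ s s' : ℝ, Ψ ⁻¹' (convexHull ℝ {0, p + s • u, p + s' • u}) =
      convexHull ℝ {((0 : ℝ), (0 : ℝ)), (h, s), (h, s')} := by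
    intro s s'
    have himg : Ψ '' (convexHull ℝ {((0 : ℝ), (0 : ℝ)), (h, s), (h, s')}) =
        convexHull ℝ {0, p + s • u, p + s' • u} := by
      rw [show Ψ = ⇑(IsLinearMap.mk' Ψ hlin) from rfl, LinearMap.image_convexHull]
      congr 1
      rw [Set.image_insert_eq, Set.image_insert_eq, Set.image_singleton]
      simp only [IsLinearMap.mk'_apply, hΨ00, hΨh]
    rw [← himg, Set.preimage_image_eq _ hinj]
  -- the volume formula
  have hvol : ∀ s s' ρ : ℝ, 0 < s → s ≤ s' → 0 < ρ →
      volume (convexHull ℝ {0, p + s • u, p + s' • u} ∩ closedBall 0 ρ) =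
      ENNReal.ofReal (∫ α in arctan (s / h)..arctan (s' / h),
        (min ρ (h / Real.cos α)) ^ 2 / 2) := by
    intro s s' ρ hs hss hρ
    have hmeas : MeasurableSet (convexHull ℝ {0, p + s • u, p + s' • u} ∩ closedBall 0 ρ) := by
      apply MeasurableSet.inter
      · exact ((Set.toFinite _).isCompact_convexHull ℝ).isClosed.measurableSet
      · exact Metric.isClosed_closedBall.measurableSet
    rw [← hΨmp.measure_preimage hmeas.nullMeasurableSet, Set.preimage_inter, hhull,
      hball ρ hρ.le, triangle_eq hh hss, volume_tri_inter_disk hh hs hss hρ]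
  -- abbreviations for the angles
  set A1 := arctan (s₁ / h) with hA1
  set A1' := arctan (s₁' / h) with hA1'
  set A2 := arctan (s₂ / h) with hA2
  set A2' := arctan (s₂' / h) with hA2'
  have hA1pos : 0 < A1 := by
    rw [hA1, ← Real.arctan_zero]
    exact Real.arctan_strictMono (by positivity)
  have hA11 : A1 ≤ A1' := Real.arctan_strictMono.monotone (by gcongr)
  have hA12 : A1' < A2 := Real.arctan_strictMono (by gcongr)
  have hA22 : A2 ≤ A2' := Real.arctan_strictMono.monotone (by gcongr)
  have hA2pi : A2' < π / 2 := Real.arctan_lt_pi_div_two _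
  have hcosal : ∀ α ∈ Set.Icc A1 A2', 0 < Real.cos α := by
    intro α hα
    exact Real.cos_pos_of_mem_Ioo ⟨by linarith [Real.pi_pos, hα.1], lt_of_le_of_lt hα.2 hA2pi⟩
  have hrh : ∀ α ∈ Set.Icc A1 A2', r ≤ h / Real.cos α := by
    intro α hα
    have hcos := hcosal α hα
    rw [le_div_iff₀ hcos]
    nlinarith [Real.cos_le_one α, hp]
  -- numerators
  have hnum : ∀ sa sb : ℝ, arctan (sa / h) ∈ Set.Icc A1 A2' → arctan (sb / h) ∈ Set.Icc A1 A2' →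
      arctan (sa / h) ≤ arctan (sb / h) →
      (∫ α in arctan (sa / h)..arctan (sb / h), (min r (h / Real.cos α)) ^ 2 / 2) =
        (arctan (sb / h) - arctan (sa / h)) * (r ^ 2 / 2) := by
    intro sa sb hma hmb hab
    rw [intervalIntegral.integral_congr (g := fun _ => r ^ 2 / 2) ?_,
      intervalIntegral.integral_const, smul_eq_mul]
    intro α hα
    rw [Set.uIcc_of_le hab] at hα
    have hαm : α ∈ Set.Icc A1 A2' := ⟨hma.1.trans hα.1, hα.2.trans hmb.2⟩
    simp only
    rw [min_eq_left (hrh α hαm)]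
  -- the denominator integrand
  set R := (1 + lam) * r with hR
  have hRpos : 0 < R := by nlinarith
  set g : ℝ → ℝ := fun α => (min R (h / Real.cos α)) ^ 2 / 2 with hg
  have hgmono : MonotoneOn g (Set.Icc A1 A2') := by
    intro x hx y hy hxy
    have hcx := hcosal x hx
    have hcy := hcosal y hy
    have hcle : Real.cos y ≤ Real.cos x :=
      Real.cos_le_cos_of_nonneg_of_le_pi (by linarith [hx.1]) (by linarith [hy.2, Real.pi_pos])
        hxy
    have hdiv : h / Real.cos x ≤ h / Real.cos y := by
      apply div_le_div_of_nonneg_left hh.le hcy hcle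
    have hmin : min R (h / Real.cos x) ≤ min R (h / Real.cos y) := min_le_min le_rfl hdiv
    have hmin0 : 0 ≤ min R (h / Real.cos x) := le_min hRpos.le (by positivity)
    simp only [hg]
    nlinarith
  have hgc : ∀ x ∈ Set.Icc A1 A2', r ^ 2 / 2 ≤ g x := by
    intro x hx
    have h1' : r ≤ min R (h / Real.cos x) := le_min (by nlinarith) (hrh x hx)
    simp only [hg]
    nlinarith
  -- the key inequality from `ratio_antitone`
  have hkey : (A2' - A1') / (∫ x in A1'..A2', g x) ≤ (A2 - A1) / (∫ x in A1..A2, g x) :=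
    ratio_antitone (by positivity) hA11 hA12 hA22 hgmono hgc
  -- rewrite everything
  have hAmem : ∀ {sa : ℝ}, s₁ ≤ sa → sa ≤ s₂' → arctan (sa / h) ∈ Set.Icc A1 A2' := by
    intro sa hla hsa
    exact ⟨Real.arctan_strictMono.monotone (by gcongr),
      Real.arctan_strictMono.monotone (by gcongr)⟩
  have hs₁₂ : s₁ < s₂ := lt_of_le_of_lt h1 h2
  have e1 := hvol s₁ s₂ r h0 hs₁₂.le hr
  have e2 := hvol s₁ s₂ R h0 hs₁₂.le hRpos
  have e3 := hvol s₁' s₂' r (h0.trans_le h1) (h2.le.trans h3) hr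
  have e4 := hvol s₁' s₂' R (h0.trans_le h1) (h2.le.trans h3) hRpos
  rw [hR] at e2 e4
  rw [e1, e2, e3, e4]
  rw [hnum s₁ s₂ (hAmem le_rfl (hs₁₂.le.trans h3)) (hAmem hs₁₂.le h3) (hA11.trans hA12.le),
    hnum s₁' s₂' (hAmem h1 (h2.le.trans h3)) (hAmem (h1.trans (h2.le.trans h3)) le_rfl)
      (hA12.le.trans hA22)]
  -- positivity facts for toReal
  have hDnn : ∀ {x y : ℝ}, x ∈ Set.Icc A1 A2' → y ∈ Set.Icc A1 A2' → x ≤ y →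
      0 ≤ ∫ t in x..y, g t := by
    intro x y hx hy hxy
    apply intervalIntegral.integral_nonneg hxy
    intro t ht
    have : t ∈ Set.Icc A1 A2' := ⟨hx.1.trans ht.1, ht.2.trans hy.2⟩
    have := hgc t this
    nlinarith
  have hm1 : arctan (s₁ / h) ∈ Set.Icc A1 A2' := hAmem le_rfl (hs₁₂.le.trans h3)
  have hm2 : arctan (s₂ / h) ∈ Set.Icc A1 A2' := hAmem hs₁₂.le h3
  have hm1' : arctan (s₁' / h) ∈ Set.Icc A1 A2' := hAmem h1 (h2.le.trans h3)
  have hm2' : arctan (s₂' / h) ∈ Set.Icc A1 A2' := hAmem (h1.trans (h2.le.trans h3)) le_rfl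
  rw [ENNReal.toReal_ofReal (by nlinarith [hA11.trans hA12.le] : (0:ℝ) ≤ (A2 - A1) * (r^2/2)),
    ENNReal.toReal_ofReal (by nlinarith [hA12.le.trans hA22] : (0:ℝ) ≤ (A2' - A1') * (r^2/2)),
    ENNReal.toReal_ofReal (hDnn hm1 hm2 (hA11.trans hA12.le)),
    ENNReal.toReal_ofReal (hDnn hm1' hm2' (hA12.le.trans hA22))]
  have hfin : (A2' - A1') * (r ^ 2 / 2) / (∫ x in A1'..A2', g x) =
      (r ^ 2 / 2) * ((A2' - A1') / (∫ x in A1'..A2', g x)) := by ring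
  have hfin2 : (A2 - A1) * (r ^ 2 / 2) / (∫ x in A1..A2, g x) =
      (r ^ 2 / 2) * ((A2 - A1) / (∫ x in A1..A2, g x)) := by ring
  rw [hfin, hfin2]
  apply mul_le_mul_of_nonneg_left hkey (by positivity)
end

section
/- Let r > 0 and λ > 0, let p ∈ ℝ² with ‖p‖ ≥ r, and let u be a unit vector orthogonal to p. For s > 0 set p(s) := p + s·u, and for 0 < s₁ < s₂ let T(s₁, s₂) := conv{0, p(s₁), p(s₂)}. Then ρ̂(B, T(s₁, s₂)) is nonincreasing in each variable: for all 0 < s₁ ≤ s₁' < s₂ ≤ s₂' one has ρ̂(B, T(s₁, s₂)) ≥ ρ̂(B, T(s₁', s₂')). -/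
open MeasureTheory Set Metric intervalIntegral RealInnerProductSpace

noncomputable abbrev E2 := EuclideanSpace ℝ (Fin 2)

lemma avg_left_s12 (f : ℝ → ℝ) (hf : Continuous f) (a a' b : ℝ) (ha : a ≤ a') (hb : a' < b)
    (hmono : ∀ x y, a ≤ x → x ≤ y → f y ≤ f x) :
    (b - a) * ∫ s in a'..b, f s ≤ (b - a') * ∫ s in a..b, f s := by
  have hii : ∀ c d : ℝ, IntervalIntegrable f volume c d := fun c d => hf.intervalIntegrable c d
  have hsplit : (∫ s in a..a', f s) + ∫ s in a'..b, f s = ∫ s in a..b, f s :=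
    integral_add_adjacent_intervals (hii a a') (hii a' b)
  have h1 : (a' - a) * f a' ≤ ∫ s in a..a', f s := by
    calc (a' - a) * f a' = ∫ _ in a..a', f a' := by rw [intervalIntegral.integral_const, smul_eq_mul]
    _ ≤ ∫ s in a..a', f s := by
        apply integral_mono_on ha (intervalIntegrable_const) (hii a a')
        intro x hx
        exact hmono x a' hx.1 hx.2
  have h2 : (∫ s in a'..b, f s) ≤ (b - a') * f a' := by
    calc (∫ s in a'..b, f s) ≤ ∫ _ in a'..b, f a' := by
          apply integral_mono_on hb.le (hii a' b) intervalIntegrable_const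
          intro x hx
          exact hmono a' x ha hx.1
    _ = (b - a') * f a' := by rw [intervalIntegral.integral_const, smul_eq_mul]
  nlinarith [sub_nonneg.2 ha, sub_pos.2 hb]

lemma avg_right_s12 (f : ℝ → ℝ) (hf : Continuous f) (a b b' : ℝ) (ha : a < b) (hb : b ≤ b')
    (hmono : ∀ x y, a ≤ x → x ≤ y → f y ≤ f x) :
    (b - a) * ∫ s in a..b', f s ≤ (b' - a) * ∫ s in a..b, f s := by
  have hii : ∀ c d : ℝ, IntervalIntegrable f volume c d := fun c d => hf.intervalIntegrable c d
  have hsplit : (∫ s in a..b, f s) + ∫ s in b..b', f s = ∫ s in a..b', f s :=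
    integral_add_adjacent_intervals (hii a b) (hii b b')
  have h1 : (∫ s in b..b', f s) ≤ (b' - b) * f b := by
    calc (∫ s in b..b', f s) ≤ ∫ _ in b..b', f b := by
          apply integral_mono_on hb (hii b b') intervalIntegrable_const
          intro x hx
          exact hmono b x (le_of_lt ha) hx.1
    _ = (b' - b) * f b := by rw [intervalIntegral.integral_const, smul_eq_mul]
  have h2 : (b - a) * f b ≤ ∫ s in a..b, f s := by
    calc (b - a) * f b = ∫ _ in a..b, f b := by rw [intervalIntegral.integral_const, smul_eq_mul]
    _ ≤ ∫ s in a..b, f s := by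
        apply integral_mono_on ha.le intervalIntegrable_const (hii a b)
        intro x hx
        exact hmono x b hx.1 hx.2
  nlinarith [sub_pos.2 ha, sub_nonneg.2 hb]


noncomputable def Phi (p u : E2) (x : E2) : E2 := (x 1) • (p + (x 0) • u)

noncomputable def PhiD (p u : E2) (x : E2) : E2 →L[ℝ] E2 :=
  (x 1) • ((EuclideanSpace.proj (0 : Fin 2) : E2 →L[ℝ] ℝ).smulRight u) +
    (EuclideanSpace.proj (1 : Fin 2) : E2 →L[ℝ] ℝ).smulRight (p + (x 0) • u)

lemma hasFDerivAt_Phi (p u : E2) (x : E2) : HasFDerivAt (Phi p u) (PhiD p u x) x := by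
  have h1 : HasFDerivAt (fun y : E2 => y 1) (EuclideanSpace.proj (1 : Fin 2) : E2 →L[ℝ] ℝ) x :=
    (EuclideanSpace.proj (1 : Fin 2) : E2 →L[ℝ] ℝ).hasFDerivAt
  have h0 : HasFDerivAt (fun y : E2 => y 0) (EuclideanSpace.proj (0 : Fin 2) : E2 →L[ℝ] ℝ) x :=
    (EuclideanSpace.proj (0 : Fin 2) : E2 →L[ℝ] ℝ).hasFDerivAt
  have h2 : HasFDerivAt (fun y : E2 => p + (y 0) • u)
      ((EuclideanSpace.proj (0 : Fin 2) : E2 →L[ℝ] ℝ).smulRight u) x := by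
    exact (h0.smul_const u).const_add p
  exact h1.smul h2

lemma det_PhiD (p u : E2) (x : E2) :
    (PhiD p u x).det = (x 1) * (u 0 * p 1 - u 1 * p 0) := by
  have hb := PiLp.basisFun 2 ℝ (Fin 2)
  rw [ContinuousLinearMap.det]
  rw [← LinearMap.det_toMatrix (PiLp.basisFun 2 ℝ (Fin 2))]
  rw [Matrix.det_fin_two]
  simp [LinearMap.toMatrix_apply, PhiD, PiLp.basisFun_apply, PiLp.basisFun_repr,
    EuclideanSpace.single_apply]
  ring


lemma comb_eq (p u : E2) (a b θ : ℝ) :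
    (1 - θ) • (p + a • u) + θ • (p + b • u) = p + ((1 - θ) * a + θ * b) • u := by
  rw [smul_add, smul_add, smul_smul, smul_smul, add_smul]
  have : (1 - θ) • p + θ • p = p := by rw [← add_smul]; norm_num
  rw [add_add_add_comm, this]

lemma mem_triangle_iff (p u : E2) (a b : ℝ) (hab : a < b) (z : E2) :
    z ∈ convexHull ℝ ({0, p + a • u, p + b • u} : Set E2) ↔
      ∃ t s : ℝ, t ∈ Icc (0:ℝ) 1 ∧ s ∈ Icc a b ∧ z = t • (p + s • u) := by
  rw [show ({0, p + a • u, p + b • u} : Set E2) = insert 0 {p + a • u, p + b • u} from rfl,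
    convexHull_insert ⟨p + a • u, by simp⟩, convexHull_pair, mem_convexJoin]
  constructor
  · rintro ⟨x, hx, w, hw, hz⟩
    rw [mem_singleton_iff] at hx
    subst hx
    rw [segment_eq_image] at hw hz
    obtain ⟨θ, hθ, rfl⟩ := hw
    obtain ⟨t, ht, rfl⟩ := hz
    refine ⟨t, (1 - θ) * a + θ * b, ht, ⟨by nlinarith [hθ.1, hθ.2], by nlinarith [hθ.1, hθ.2]⟩, ?_⟩
    show (1 - t) • (0:E2) + t • ((1 - θ) • (p + a • u) + θ • (p + b • u)) = _
    rw [comb_eq]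
    simp
  · rintro ⟨t, s, ht, hs, rfl⟩
    refine ⟨0, rfl, p + s • u, ?_, ?_⟩
    · rw [segment_eq_image]
      refine ⟨(s - a)/(b - a), ⟨div_nonneg (by linarith [hs.1]) (by linarith), ?_⟩, ?_⟩
      · rw [div_le_one (by linarith)]; linarith [hs.2]
      · show (1 - (s-a)/(b-a)) • (p + a • u) + ((s-a)/(b-a)) • (p + b • u) = _
        rw [comb_eq]
        have hba : b - a ≠ 0 := by linarith
        have hc : (1 - (s-a)/(b-a)) * a + (s-a)/(b-a) * b = s := by field_simp; ring
        rw [hc]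
    · rw [segment_eq_image]
      exact ⟨t, ht, by simp⟩


lemma norm_pu {p u : E2} (hu : ‖u‖ = 1) (hpu : ⟪p, u⟫ = 0) (s : ℝ) :
    ‖p + s • u‖ = Real.sqrt (‖p‖^2 + s^2) := by
  have h2 : ‖p + s • u‖^2 = ‖p‖^2 + s^2 := by
    rw [norm_add_sq_real, real_inner_smul_right, hpu, norm_smul, hu]
    simp [mul_pow, sq_abs]
  rw [← Real.sqrt_sq (norm_nonneg (p + s • u)), h2]

lemma pu_ne_zero {p u : E2} (hp : 0 < ‖p‖) (hu : ‖u‖ = 1) (hpu : ⟪p, u⟫ = 0) (s : ℝ) :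
    p + s • u ≠ 0 := by
  intro h
  have h1 := norm_pu hu hpu (p := p) s
  rw [h, norm_zero] at h1
  have hs : Real.sqrt (‖p‖^2 + s^2) > 0 := Real.sqrt_pos.2 (by nlinarith)
  linarith [h1 ▸ hs]

lemma inner_Phi_p {p u : E2} (hpu : ⟪p, u⟫ = 0) (x : E2) : ⟪Phi p u x, p⟫ = (x 1) * ‖p‖^2 := by
  rw [Phi, real_inner_smul_left, inner_add_left, real_inner_smul_left, real_inner_comm p u] at *
  rw [hpu, real_inner_self_eq_norm_sq]
  ring

lemma inner_Phi_u {p u : E2} (hu : ‖u‖ = 1) (hpu : ⟪p, u⟫ = 0) (x : E2) :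
    ⟪Phi p u x, u⟫ = (x 1) * (x 0) := by
  rw [Phi, real_inner_smul_left, inner_add_left, real_inner_smul_left, hpu,
    real_inner_self_eq_norm_sq, hu]
  ring

lemma injOn_Phi {p u : E2} (hp : 0 < ‖p‖) (hu : ‖u‖ = 1) (hpu : ⟪p, u⟫ = 0) :
    InjOn (Phi p u) {x : E2 | 0 < x 1} := by
  intro x hx y hy h
  have h1 : (x 1) * ‖p‖^2 = (y 1) * ‖p‖^2 := by
    rw [← inner_Phi_p hpu x, ← inner_Phi_p hpu y, h]
  have hx1 : x 1 = y 1 := mul_right_cancel₀ (ne_of_gt (by positivity : (0:ℝ) < ‖p‖^2)) h1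
  have h2 : (x 1) * (x 0) = (y 1) * (y 0) := by
    rw [← inner_Phi_u hu hpu x, ← inner_Phi_u hu hpu y, h]
  have hx0 : x 0 = y 0 := by
    rw [hx1] at h2
    exact mul_left_cancel₀ (ne_of_gt (hx1 ▸ hx)) h2
  ext i
  fin_cases i <;> assumption

lemma norm_Phi {p u : E2} (hu : ‖u‖ = 1) (hpu : ⟪p, u⟫ = 0) (x : E2) (hx : 0 ≤ x 1) :
    ‖Phi p u x‖ = x 1 * Real.sqrt (‖p‖^2 + (x 0)^2) := by
  rw [Phi, norm_smul, norm_pu hu hpu, Real.norm_eq_abs, abs_of_nonneg hx]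


noncomputable def mkpt (s t : ℝ) : E2 := (WithLp.equiv 2 (Fin 2 → ℝ)).symm ![s, t]

@[simp] lemma mkpt_0 (s t : ℝ) : mkpt s t 0 = s := rfl
@[simp] lemma mkpt_1 (s t : ℝ) : mkpt s t 1 = t := rfl


noncomputable def chi : E2 ≃ᵐ ℝ × ℝ :=
  (MeasurableEquiv.toLp 2 (Fin 2 → ℝ)).symm.trans (MeasurableEquiv.finTwoArrow)

lemma chi_mp : MeasurePreserving chi volume volume :=
  (volume_preserving_finTwoArrow ℝ).comp (EuclideanSpace.volume_preserving_symm_measurableEquiv_toLp (Fin 2))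

lemma vol_image {p u : E2} (hp : 0 < ‖p‖) (hu : ‖u‖ = 1) (hpu : ⟪p, u⟫ = 0) {a b : ℝ}
    (hab : a ≤ b) (g : ℝ → ℝ) (hg : Continuous g) (hg0 : ∀ s, 0 < g s) :
    volume (Phi p u '' {x : E2 | x 0 ∈ Icc a b ∧ x 1 ∈ Ioc 0 (g (x 0))}) =
      ENNReal.ofReal ((∫ s in a..b, (g s)^2) * (‖p‖/2)) := by
  have m0 : Measurable fun x : E2 => x 0 := by measurability
  have m1 : Measurable fun x : E2 => x 1 := by measurability
  set S : Set E2 := {x | x 0 ∈ Icc a b ∧ x 1 ∈ Ioc 0 (g (x 0))} with hS_def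
  have hS : MeasurableSet S := by
    refine MeasurableSet.inter ?_ ?_
    · exact ((measurableSet_le measurable_const m0).inter (measurableSet_le m0 measurable_const))
    · exact ((measurableSet_lt measurable_const m1).inter
        (measurableSet_le m1 (hg.measurable.comp m0)))
  have hder : ∀ x ∈ S, HasFDerivWithinAt (Phi p u) (PhiD p u x) S x :=
    fun x _ => (hasFDerivAt_Phi p u x).hasFDerivWithinAt
  have hinj : InjOn (Phi p u) S := (injOn_Phi hp hu hpu).mono (fun x hx => hx.2.1)
  rw [← lintegral_abs_det_fderiv_eq_addHaar_image volume hS hder hinj]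
  have hpn : p 0 * p 0 + p 1 * p 1 = ‖p‖^2 := by
    rw [← real_inner_self_eq_norm_sq]
    simp only [PiLp.inner_apply, RCLike.inner_apply, Fin.sum_univ_two, conj_trivial]
  have hun : u 0 * u 0 + u 1 * u 1 = 1 := by
    have h := real_inner_self_eq_norm_sq u
    rw [hu, one_pow] at h
    rw [← h]
    simp only [PiLp.inner_apply, RCLike.inner_apply, Fin.sum_univ_two, conj_trivial]
  have hpuc : p 0 * u 0 + p 1 * u 1 = 0 := by
    simpa [PiLp.inner_apply, RCLike.inner_apply, Fin.sum_univ_two, mul_comm] using hpu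
  have hcabs : |u 0 * p 1 - u 1 * p 0| = ‖p‖ := by
    have h2 : (u 0 * p 1 - u 1 * p 0)^2 = ‖p‖^2 := by nlinarith
    rw [← Real.sqrt_sq_eq_abs, h2, Real.sqrt_sq (norm_nonneg p)]
  have hcong : ∫⁻ x in S, ENNReal.ofReal |(PhiD p u x).det| =
      ∫⁻ x in S, ENNReal.ofReal (x 1 * ‖p‖) := by
    refine setLIntegral_congr_fun hS (fun x hx => ?_)
    rw [det_PhiD, abs_mul, hcabs, abs_of_pos hx.2.1]
  rw [hcong]
  set A : Set (ℝ × ℝ) := {z | z.1 ∈ Icc a b ∧ z.2 ∈ Ioc 0 (g z.1)} with hA_def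
  have hA : MeasurableSet A := by
    refine MeasurableSet.inter ?_ ?_
    · exact ((measurableSet_le measurable_const measurable_fst).inter
        (measurableSet_le measurable_fst measurable_const))
    · exact ((measurableSet_lt measurable_const measurable_snd).inter
        (measurableSet_le measurable_snd (hg.measurable.comp measurable_fst)))
  have hstep : ∫⁻ x in S, ENNReal.ofReal (x 1 * ‖p‖) =
      ∫⁻ z in A, ENNReal.ofReal (z.2 * ‖p‖) := by
    convert chi_mp.setLIntegral_comp_preimage_emb chi.measurableEmbedding
      (fun z : ℝ × ℝ => ENNReal.ofReal (z.2 * ‖p‖)) A using 1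
    rfl
  have hmeasF : Measurable (A.indicator fun z : ℝ × ℝ => ENNReal.ofReal (z.2 * ‖p‖)) :=
    Measurable.indicator ((measurable_snd.mul measurable_const).ennreal_ofReal) hA
  have hfub := lintegral_prod (μ := (volume : Measure ℝ)) (ν := (volume : Measure ℝ)) (A.indicator fun z : ℝ × ℝ => ENNReal.ofReal (z.2 * ‖p‖))
    hmeasF.aemeasurable
  rw [hstep, ← lintegral_indicator hA _, Measure.volume_eq_prod, hfub]
  have hG : ∀ c : ℝ, 0 < c → ∫⁻ y in Ioc 0 c, ENNReal.ofReal (y * ‖p‖) =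
      ENNReal.ofReal (c^2 * (‖p‖/2)) := by
    intro c hc
    have hint : IntegrableOn (fun y : ℝ => y * ‖p‖) (Ioc 0 c) volume :=
      (continuous_id.mul continuous_const).integrableOn_Ioc
    rw [← ofReal_integral_eq_lintegral_ofReal hint
      ((ae_restrict_iff' measurableSet_Ioc).2 (ae_of_all _ fun y hy =>
        mul_nonneg hy.1.le (norm_nonneg p)))]
    congr 1
    rw [← intervalIntegral.integral_of_le hc.le, intervalIntegral.integral_mul_const, integral_id]
    ring
  have hin : ∀ x : ℝ, (∫⁻ y, A.indicator (fun z : ℝ × ℝ => ENNReal.ofReal (z.2 * ‖p‖)) (x, y)) =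
      (Icc a b).indicator (fun x' => ENNReal.ofReal ((g x')^2 * (‖p‖/2))) x := by
    intro x
    by_cases hx : x ∈ Icc a b
    · rw [indicator_of_mem hx, ← hG (g x) (hg0 x), ← lintegral_indicator measurableSet_Ioc _]
      refine lintegral_congr fun y => ?_
      by_cases hy : y ∈ Ioc 0 (g x)
      · rw [indicator_of_mem hy, indicator_of_mem (show (x, y) ∈ A from ⟨hx, hy⟩)]
      · rw [indicator_of_notMem hy, indicator_of_notMem (fun h => hy h.2)]
    · simp only [indicator_of_notMem hx]
      have : ∀ y : ℝ, A.indicator (fun z : ℝ × ℝ => ENNReal.ofReal (z.2 * ‖p‖)) (x, y) = 0 :=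
        fun y => indicator_of_notMem (fun h => hx h.1) _
      simp [this]
  simp_rw [hin]
  rw [lintegral_indicator measurableSet_Icc _,
    ← ofReal_integral_eq_lintegral_ofReal ((by fun_prop : Continuous fun x => g x ^ 2 * (‖p‖/2)).integrableOn_Icc)
      (ae_of_all _ fun x => by positivity)]
  congr 1
  rw [integral_Icc_eq_integral_Ioc, ← intervalIntegral.integral_of_le hab,
    intervalIntegral.integral_mul_const]

lemma Phi_mkpt (p u : E2) (s t : ℝ) : Phi p u (mkpt s t) = t • (p + s • u) := rfl


lemma image_Phi_T {p u : E2} (hp : 0 < ‖p‖) (hu : ‖u‖ = 1) (hpu : ⟪p, u⟫ = 0) {a b : ℝ}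
    (hab : a < b) (g : ℝ → ℝ) (hgdef : ∀ s, g s = 1) :
    Phi p u '' {x : E2 | x 0 ∈ Icc a b ∧ x 1 ∈ Ioc 0 (g (x 0))} =
      convexHull ℝ ({0, p + a • u, p + b • u} : Set E2) \ {0} := by
  ext z
  simp only [mem_image, mem_diff, mem_singleton_iff, mem_setOf_eq]
  constructor
  · rintro ⟨x, ⟨hx0, hx1⟩, rfl⟩
    rw [hgdef] at hx1
    refine ⟨(mem_triangle_iff p u a b hab _).2 ⟨x 1, x 0, ⟨hx1.1.le, hx1.2⟩, hx0, rfl⟩, ?_⟩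
    exact smul_ne_zero (ne_of_gt hx1.1) (pu_ne_zero hp hu hpu _)
  · rintro ⟨hz, hz0⟩
    obtain ⟨t, s, ht, hs, rfl⟩ := (mem_triangle_iff p u a b hab _).1 hz
    have ht0 : 0 < t := lt_of_le_of_ne ht.1 (by rintro rfl; simp at hz0)
    refine ⟨mkpt s t, ⟨hs, ht0, ?_⟩, rfl⟩
    rw [hgdef]
    exact ht.2

lemma image_Phi_TB {p u : E2} (hp : 0 < ‖p‖) (hu : ‖u‖ = 1) (hpu : ⟪p, u⟫ = 0) {a b R : ℝ}
    (hab : a < b) (hR : 0 < R) (g : ℝ → ℝ)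
    (hgdef : ∀ s, g s = min 1 (R / Real.sqrt (‖p‖^2 + s^2))) :
    Phi p u '' {x : E2 | x 0 ∈ Icc a b ∧ x 1 ∈ Ioc 0 (g (x 0))} =
      (convexHull ℝ ({0, p + a • u, p + b • u} : Set E2) ∩ Metric.closedBall 0 R) \ {0} := by
  have hsq : ∀ s : ℝ, 0 < Real.sqrt (‖p‖^2 + s^2) := fun s => Real.sqrt_pos.2 (by nlinarith)
  ext z
  simp only [mem_image, mem_diff, mem_inter_iff, mem_singleton_iff, mem_setOf_eq]
  constructor
  · rintro ⟨x, ⟨hx0, hx1⟩, rfl⟩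
    rw [hgdef] at hx1
    have h1 : x 1 ≤ 1 := le_trans hx1.2 (min_le_left _ _)
    refine ⟨⟨(mem_triangle_iff p u a b hab _).2 ⟨x 1, x 0, ⟨hx1.1.le, h1⟩, hx0, rfl⟩, ?_⟩, ?_⟩
    · rw [Metric.mem_closedBall, dist_zero_right, Phi, norm_smul, norm_pu hu hpu,
        Real.norm_eq_abs, abs_of_pos hx1.1]
      have h2 := le_trans hx1.2 (min_le_right 1 _)
      rwa [le_div_iff₀ (hsq (x 0))] at h2
    · exact smul_ne_zero (ne_of_gt hx1.1) (pu_ne_zero hp hu hpu _)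
  · rintro ⟨⟨hz, hzB⟩, hz0⟩
    obtain ⟨t, s, ht, hs, rfl⟩ := (mem_triangle_iff p u a b hab _).1 hz
    have ht0 : 0 < t := lt_of_le_of_ne ht.1 (by rintro rfl; simp at hz0)
    refine ⟨mkpt s t, ⟨hs, ht0, ?_⟩, rfl⟩
    simp only [mkpt_0, mkpt_1]
    rw [hgdef]
    refine le_min ht.2 ?_
    rw [Metric.mem_closedBall, dist_zero_right, norm_smul, norm_pu hu hpu,
      Real.norm_eq_abs, abs_of_pos ht0] at hzB
    rw [le_div_iff₀ (hsq s)]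
    simpa using hzB
lemma vol_T {p u : E2} (hp : 0 < ‖p‖) (hu : ‖u‖ = 1) (hpu : ⟪p, u⟫ = 0) {a b : ℝ}
    (hab : a < b) :
    volume (convexHull ℝ ({0, p + a • u, p + b • u} : Set E2)) =
      ENNReal.ofReal ((b - a) * (‖p‖ / 2)) := by
  have h1 := vol_image hp hu hpu hab.le (fun _ => (1:ℝ)) continuous_const (fun _ => one_pos)
  rw [image_Phi_T hp hu hpu hab (fun _ => (1:ℝ)) (fun _ => rfl),
    measure_diff_null (measure_singleton 0)] at h1
  rw [h1]
  congr 1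
  simp

lemma vol_TB {p u : E2} (hp : 0 < ‖p‖) (hu : ‖u‖ = 1) (hpu : ⟪p, u⟫ = 0) {a b R : ℝ}
    (hab : a < b) (hR : 0 < R) :
    volume (convexHull ℝ ({0, p + a • u, p + b • u} : Set E2) ∩ Metric.closedBall 0 R) =
      ENNReal.ofReal ((∫ s in a..b, (min 1 (R / Real.sqrt (‖p‖^2 + s^2)))^2) * (‖p‖ / 2)) := by
  have hsq : ∀ s : ℝ, 0 < Real.sqrt (‖p‖^2 + s^2) := fun s => Real.sqrt_pos.2 (by nlinarith)
  have hgc : Continuous fun s : ℝ => min 1 (R / Real.sqrt (‖p‖^2 + s^2)) := by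
    refine continuous_const.min (continuous_const.div ?_ fun s => (hsq s).ne')
    exact Real.continuous_sqrt.comp (continuous_const.add (continuous_pow 2))
  have h1 := vol_image hp hu hpu hab.le (fun s => min 1 (R / Real.sqrt (‖p‖^2 + s^2))) hgc
    (fun s => lt_min one_pos (div_pos hR (hsq s)))
  rw [image_Phi_TB hp hu hpu hab hR _ (fun _ => rfl),
    measure_diff_null (measure_singleton 0)] at h1
  rw [h1]

/-- Monotonicity of the soft density `ρ̂(B, T(s₁,s₂))` of triangles with apex at the center of
the disk `B`: for `0 < s₁ ≤ s₁' < s₂ ≤ s₂'`, `ρ̂(B, T(s₁', s₂')) ≤ ρ̂(B, T(s₁, s₂))`, where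
`T(s₁,s₂) = conv{0, p + s₁u, p + s₂u}` and `ρ̂(B, T) = area(T ∩ B_λ)/area(T)`. -/
theorem rhoHat_antitone (r lam : ℝ) (hr : 0 < r) (hlam : 0 < lam)
    (p u : EuclideanSpace ℝ (Fin 2)) (hp : r ≤ ‖p‖) (hu : ‖u‖ = 1) (hpu : ⟪p, u⟫ = 0)
    (s₁ s₁' s₂ s₂' : ℝ) (h0 : 0 < s₁) (h1 : s₁ ≤ s₁') (h2 : s₁' < s₂) (h3 : s₂ ≤ s₂') :
    (volume (convexHull ℝ {0, p + s₁' • u, p + s₂' • u} ∩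
        closedBall 0 ((1 + lam) * r))).toReal /
      (volume (convexHull ℝ ({0, p + s₁' • u, p + s₂' • u} :
        Set (EuclideanSpace ℝ (Fin 2))))).toReal ≤
    (volume (convexHull ℝ {0, p + s₁ • u, p + s₂ • u} ∩
        closedBall 0 ((1 + lam) * r))).toReal /
      (volume (convexHull ℝ ({0, p + s₁ • u, p + s₂ • u} :
        Set (EuclideanSpace ℝ (Fin 2))))).toReal := by
  have hp' : 0 < ‖p‖ := lt_of_lt_of_le hr hp
  set R : ℝ := (1 + lam) * r with hR_def
  have hR : 0 < R := mul_pos (by linarith) hr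
  set f : ℝ → ℝ := fun s => (min 1 (R / Real.sqrt (‖p‖^2 + s^2)))^2 with hf_def
  have hsq : ∀ s : ℝ, 0 < Real.sqrt (‖p‖^2 + s^2) := fun s => Real.sqrt_pos.2 (by nlinarith)
  have hfc : Continuous f := by
    refine (continuous_const.min (continuous_const.div ?_ fun s => (hsq s).ne')).pow 2
    exact Real.continuous_sqrt.comp (continuous_const.add (continuous_pow 2))
  have hmono : ∀ x y : ℝ, s₁ ≤ x → x ≤ y → f y ≤ f x := by
    intro x y hx hxy
    have hx0 : 0 ≤ x := le_trans h0.le hx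
    have hsle : Real.sqrt (‖p‖^2 + x^2) ≤ Real.sqrt (‖p‖^2 + y^2) :=
      Real.sqrt_le_sqrt (by nlinarith)
    have hgle : min 1 (R / Real.sqrt (‖p‖^2 + y^2)) ≤ min 1 (R / Real.sqrt (‖p‖^2 + x^2)) :=
      min_le_min le_rfl (div_le_div_of_nonneg_left hR.le (hsq x) hsle)
    have hgnn : 0 ≤ min 1 (R / Real.sqrt (‖p‖^2 + y^2)) :=
      le_min zero_le_one (div_nonneg hR.le (hsq y).le)
    exact pow_le_pow_left₀ hgnn hgle 2
  have h2' : s₁ < s₂ := lt_of_le_of_lt h1 h2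
  have h2'' : s₁' < s₂' := lt_of_lt_of_le h2 h3
  -- volumes
  have vT : volume (convexHull ℝ ({0, p + s₁ • u, p + s₂ • u} : Set E2)) =
      ENNReal.ofReal ((s₂ - s₁) * (‖p‖ / 2)) := vol_T hp' hu hpu h2'
  have vT' : volume (convexHull ℝ ({0, p + s₁' • u, p + s₂' • u} : Set E2)) =
      ENNReal.ofReal ((s₂' - s₁') * (‖p‖ / 2)) := vol_T hp' hu hpu h2''
  have vB : volume (convexHull ℝ ({0, p + s₁ • u, p + s₂ • u} : Set E2) ∩
      Metric.closedBall 0 R) = ENNReal.ofReal ((∫ s in s₁..s₂, f s) * (‖p‖ / 2)) :=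
    vol_TB hp' hu hpu h2' hR
  have vB' : volume (convexHull ℝ ({0, p + s₁' • u, p + s₂' • u} : Set E2) ∩
      Metric.closedBall 0 R) = ENNReal.ofReal ((∫ s in s₁'..s₂', f s) * (‖p‖ / 2)) :=
    vol_TB hp' hu hpu h2'' hR
  rw [vT, vT', vB, vB']
  have hInn : ∀ c d : ℝ, c ≤ d → 0 ≤ ∫ s in c..d, f s := fun c d hcd =>
    intervalIntegral.integral_nonneg hcd (fun x _ => sq_nonneg _)
  rw [ENNReal.toReal_ofReal (mul_nonneg (hInn s₁' s₂' h2''.le) (by positivity)),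
    ENNReal.toReal_ofReal (mul_nonneg (hInn s₁ s₂ h2'.le) (by positivity)),
    ENNReal.toReal_ofReal (mul_nonneg (by linarith [h2''] : (0:ℝ) ≤ s₂' - s₁') (by positivity)),
    ENNReal.toReal_ofReal (mul_nonneg (by linarith [h2'] : (0:ℝ) ≤ s₂ - s₁) (by positivity))]
  have hd1 : (0:ℝ) < (s₂' - s₁') * (‖p‖ / 2) := mul_pos (by linarith) (by positivity)
  have hd2 : (0:ℝ) < (s₂ - s₁) * (‖p‖ / 2) := mul_pos (by linarith) (by positivity)
  rw [div_le_div_iff₀ hd1 hd2]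
  -- key inequality
  have A1 := avg_left_s12 f hfc s₁ s₁' s₂ h1 h2 hmono
  have A2 := avg_right_s12 f hfc s₁' s₂ s₂' h2 h3 (fun x y hx hxy => hmono x y (le_trans h1 hx) hxy)
  have key : (s₂ - s₁) * ∫ s in s₁'..s₂', f s ≤ (s₂' - s₁') * ∫ s in s₁..s₂, f s := by
    have h5 : (s₂ - s₁) * ((s₂ - s₁') * ∫ s in s₁'..s₂', f s) ≤
        (s₂ - s₁) * ((s₂' - s₁') * ∫ s in s₁'..s₂, f s) :=
      mul_le_mul_of_nonneg_left A2 (by linarith)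
    have h6 : (s₂' - s₁') * ((s₂ - s₁) * ∫ s in s₁'..s₂, f s) ≤
        (s₂' - s₁') * ((s₂ - s₁') * ∫ s in s₁..s₂, f s) :=
      mul_le_mul_of_nonneg_left A1 (by linarith)
    have h7 : (s₂ - s₁') * ((s₂ - s₁) * ∫ s in s₁'..s₂', f s) ≤
        (s₂ - s₁') * ((s₂' - s₁') * ∫ s in s₁..s₂, f s) := by nlinarith
    exact le_of_mul_le_mul_left h7 (by linarith)
  nlinarith [key, mul_le_mul_of_nonneg_left key (mul_nonneg (norm_nonneg p) (norm_nonneg p)),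
    sq_nonneg ‖p‖, norm_nonneg p]
end
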